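/- arXiv:2304.12715 — 4 statements merged into one kernel-verified Lean document; each statement's English description precedes it below -/
import Mathlib

section
/- Let d ≥ 1 and let σ be a finite positive measure on ℝ^d with σ(ℝ^d) > 0. Then the upper dimension of σ equals sup{ α ≥ 0 : there exists a positive measure σ̃ with σ̃ ≤ σ, σ̃ ≠ 0, and σ̃(B_r(x)) ≤ r^α for all x ∈ ℝ^d and all 0 < r ≤ 1 }. -/
open MeasureTheory Filter Set ENNReal Topology

noncomputable section

lemma ediam_closedBall_le {X : Type*} [MetricSpace X] (x : X) {r : ℝ} (hr : 0 ≤ r) :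
    EMetric.diam (Metric.closedBall x r) ≤ ENNReal.ofReal (2 * r) := by
  rw [← Metric.emetric_closedBall hr]
  calc EMetric.diam (EMetric.closedBall x (ENNReal.ofReal r)) ≤ 2 * ENNReal.ofReal r :=
        EMetric.diam_closedBall
    _ = ENNReal.ofReal (2 * r) := by
        rw [ENNReal.ofReal_mul (by norm_num : (0:ℝ) ≤ 2)]; norm_num

lemma tendsto_rpow_zero {f : ℕ → ℝ} (hf : Tendsto f atTop (𝓝 0)) {β : ℝ} (hβ : 0 < β) :
    Tendsto (fun n => (f n) ^ β) atTop (𝓝 0) := by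
  have h := (Real.continuousAt_rpow_const 0 β (Or.inr hβ.le)).tendsto.comp hf
  simpa [Function.comp_def, Real.zero_rpow hβ.ne'] using h

/-- Easy direction: a measure with a Frostman-type bound is dominated by Hausdorff measure. -/
lemma frostman_le_hausdorff {X : Type*} [MetricSpace X] [MeasurableSpace X] [BorelSpace X]
    (σ' : Measure X) {α : ℝ} (hα : 0 ≤ α)
    (hb : ∀ (x : X) (r : ℝ), 0 < r → r ≤ 1 →
      σ' (Metric.closedBall x r) ≤ ENNReal.ofReal (r ^ α)) :
    σ' ≤ μH[α] := by
  refine MeasureTheory.Measure.le_hausdorffMeasure α σ' 1 one_pos (fun s hs => ?_)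
  rcases s.eq_empty_or_nonempty with rfl | ⟨x₀, hx₀⟩
  · simp
  have hDtop : EMetric.diam s ≠ ⊤ := (lt_of_le_of_lt hs (by norm_num)).ne
  rcases eq_or_ne (EMetric.diam s) 0 with hD0 | hD0
  · have hsub : s ⊆ {x₀} := fun y hy => (EMetric.diam_eq_zero_iff.1 hD0 hy hx₀ : y = x₀)
    rcases eq_or_lt_of_le hα with rfl | hαpos
    · rw [show Metric.ediam s = 0 from hD0, ENNReal.rpow_zero]
      calc σ' s ≤ σ' (Metric.closedBall x₀ 1) :=
            measure_mono (hsub.trans (Set.singleton_subset_iff.2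
              (Metric.mem_closedBall_self zero_le_one)))
        _ ≤ ENNReal.ofReal ((1:ℝ) ^ (0:ℝ)) := hb x₀ 1 one_pos le_rfl
        _ = 1 := by simp
    · rw [show Metric.ediam s = 0 from hD0, ENNReal.zero_rpow_of_pos hαpos]
      have htend : Tendsto (fun n : ℕ => ENNReal.ofReal ((1 / (n + 1) : ℝ) ^ α)) atTop (𝓝 0) := by
        have h1 : Tendsto (fun n : ℕ => (1 / (n + 1) : ℝ)) atTop (𝓝 0) :=
          tendsto_one_div_add_atTop_nhds_zero_nat
        have h2 := tendsto_rpow_zero h1 hαpos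
        simpa using ENNReal.tendsto_ofReal h2
      refine ge_of_tendsto' htend (fun n => ?_)
      have hpos : (0:ℝ) < 1 / (n + 1) := by positivity
      calc σ' s ≤ σ' (Metric.closedBall x₀ ((1 / (n + 1) : ℝ))) := by
            exact measure_mono (hsub.trans (Set.singleton_subset_iff.2
              (Metric.mem_closedBall_self hpos.le)))
        _ ≤ ENNReal.ofReal ((1 / (n + 1) : ℝ) ^ α) := by
            refine hb _ _ hpos ?_
            rw [div_le_one (by positivity)]
            linarith [Nat.cast_nonneg (α := ℝ) n]
  · set r := (EMetric.diam s).toReal with hr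
    have hr0 : 0 < r := ENNReal.toReal_pos hD0 hDtop
    have hr1 : r ≤ 1 := by
      have := ENNReal.toReal_mono (by norm_num : (1:ℝ≥0∞) ≠ ⊤) hs
      rw [ENNReal.toReal_one] at this; exact this
    have hsub : s ⊆ Metric.closedBall x₀ r := by
      intro y hy
      have h1 : edist y x₀ ≤ EMetric.diam s := EMetric.edist_le_diam_of_mem hy hx₀
      have h2 := ENNReal.toReal_mono hDtop h1
      rw [Metric.mem_closedBall, dist_edist]
      exact h2
    calc σ' s ≤ σ' (Metric.closedBall x₀ r) := measure_mono hsub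
      _ ≤ ENNReal.ofReal (r ^ α) := hb x₀ r hr0 hr1
      _ = ENNReal.ofReal r ^ α := (ENNReal.ofReal_rpow_of_pos hr0).symm
      _ = EMetric.diam s ^ α := by rw [hr, ENNReal.ofReal_toReal hDtop]

/-- Hard direction: existence of a Frostman-type minorant below the upper dimension. -/
lemma exists_frostman_measure {X : Type*} [MetricSpace X] [SecondCountableTopology X]
    [MeasurableSpace X] [BorelSpace X] (σ : Measure X) [IsFiniteMeasure σ] (hσ : σ ≠ 0)
    {α : ℝ} (hα : 0 < α)
    (h : ∀ A : Set X, MeasurableSet A → σ Aᶜ = 0 → ENNReal.ofReal α < dimH A) :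
    ∃ σ' : Measure X, σ' ≠ 0 ∧ σ' ≤ σ ∧ ∀ (x : X) (r : ℝ), 0 < r → r ≤ 1 →
      σ' (Metric.closedBall x r) ≤ ENNReal.ofReal (r ^ α) := by
  classical
  set F : ℕ → Set X := fun n => {x | ∀ q : ℚ, 0 < (q:ℝ) → (q:ℝ) ≤ 2 →
    σ (Metric.closedBall x (q:ℝ)) ≤ ((n:ℝ≥0∞)+1) * ENNReal.ofReal ((q:ℝ) ^ α)} with hFdef
  by_cases hex : ∃ n, σ (F n) ≠ 0
  · obtain ⟨n, hn⟩ := hex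
    set K : ℝ≥0∞ := ((n:ℝ≥0∞)+1) * ENNReal.ofReal ((4:ℝ) ^ α)
        + σ univ / ENNReal.ofReal ((2⁻¹:ℝ) ^ α) + 1 with hKdef
    have hof2 : (0:ℝ≥0∞) < ENNReal.ofReal ((2⁻¹:ℝ) ^ α) :=
      ENNReal.ofReal_pos.2 (Real.rpow_pos_of_pos (by norm_num) _)
    have hK1 : (1:ℝ≥0∞) ≤ K := le_add_self
    have hKne0 : K ≠ 0 := fun h0 => by simp [h0] at hK1
    have hKtop : K ≠ ⊤ := by
      refine ENNReal.add_ne_top.2 ⟨ENNReal.add_ne_top.2 ⟨?_, ?_⟩, one_ne_top⟩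
      · exact ENNReal.mul_ne_top (by simp) ENNReal.ofReal_ne_top
      · exact (ENNReal.div_lt_top (measure_ne_top σ _) hof2.ne').ne
    set c : ℝ≥0∞ := K⁻¹ with hc
    have hc0 : c ≠ 0 := ENNReal.inv_ne_zero.2 hKtop
    have hcK : c * K = 1 := ENNReal.inv_mul_cancel hKne0 hKtop
    have hc1 : c ≤ 1 := ENNReal.inv_le_one.2 hK1
    refine ⟨c • σ.restrict (F n), ?_, ?_, ?_⟩
    · intro h0
      have huniv : (c • σ.restrict (F n)) univ = c * σ (F n) := by
        rw [Measure.smul_apply, smul_eq_mul, Measure.restrict_apply_univ]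
      rw [h0] at huniv
      simp only [Measure.coe_zero, Pi.zero_apply] at huniv
      exact (mul_ne_zero hc0 hn) huniv.symm
    · rw [Measure.le_iff]
      intro s hs
      rw [Measure.smul_apply, smul_eq_mul, Measure.restrict_apply hs]
      calc c * σ (s ∩ F n) ≤ 1 * σ (s ∩ F n) := mul_le_mul' hc1 le_rfl
        _ ≤ σ s := by rw [one_mul]; exact measure_mono inter_subset_left
    · intro x r hr hr1
      rw [Measure.smul_apply, smul_eq_mul, Measure.restrict_apply measurableSet_closedBall]
      rcases (Metric.closedBall x r ∩ F n).eq_empty_or_nonempty with he | ⟨y, hyB, hyF⟩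
      · rw [he]; simp
      · by_cases hhalf : r ≤ 2⁻¹
        · obtain ⟨q, hq1, hq2⟩ := exists_rat_btwn (show (2*r:ℝ) < min (4*r) 2 by
            rcases le_or_gt (4*r) 2 with h4 | h4
            · rw [min_eq_left h4]; linarith
            · rw [min_eq_right h4.le]; linarith)
          have hq0 : 0 < (q:ℝ) := lt_trans (by positivity) hq1
          have hq2' : (q:ℝ) ≤ 2 := (lt_of_lt_of_le hq2 (min_le_right _ _)).le
          have hq4 : (q:ℝ) ≤ 4*r := (lt_of_lt_of_le hq2 (min_le_left _ _)).le
          have hsub : Metric.closedBall x r ∩ F n ⊆ Metric.closedBall y (q:ℝ) := by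
            rintro z ⟨hz, -⟩
            rw [Metric.mem_closedBall] at hz hyB ⊢
            calc dist z y ≤ dist z x + dist x y := dist_triangle _ _ _
              _ ≤ r + r := add_le_add hz (by rwa [dist_comm])
              _ ≤ (q:ℝ) := by linarith
          have hXK : ((n:ℝ≥0∞)+1) * ENNReal.ofReal ((4:ℝ)^α) ≤ K :=
            le_trans le_self_add le_self_add
          calc c * σ (Metric.closedBall x r ∩ F n)
              ≤ c * σ (Metric.closedBall y (q:ℝ)) := mul_le_mul' le_rfl (measure_mono hsub)
            _ ≤ c * (((n:ℝ≥0∞)+1) * ENNReal.ofReal ((q:ℝ)^α)) :=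
                mul_le_mul' le_rfl (hyF q hq0 hq2')
            _ ≤ c * (((n:ℝ≥0∞)+1) * ENNReal.ofReal ((4*r:ℝ)^α)) := by
                have := Real.rpow_le_rpow hq0.le hq4 hα.le
                gcongr
            _ = (c * (((n:ℝ≥0∞)+1) * ENNReal.ofReal ((4:ℝ)^α))) * ENNReal.ofReal (r^α) := by
                rw [Real.mul_rpow (by norm_num) hr.le,
                  ENNReal.ofReal_mul (by positivity), mul_assoc, mul_assoc]
            _ ≤ (c * K) * ENNReal.ofReal (r^α) := by gcongr
            _ = ENNReal.ofReal (r^α) := by rw [hcK, one_mul]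
        · push_neg at hhalf
          have hdK : σ univ / ENNReal.ofReal ((2⁻¹:ℝ)^α) ≤ K :=
            le_trans le_add_self le_self_add
          have h1 : σ univ ≤ K * ENNReal.ofReal ((2⁻¹:ℝ)^α) :=
            (ENNReal.div_le_iff hof2.ne' ENNReal.ofReal_ne_top).1 hdK
          calc c * σ (Metric.closedBall x r ∩ F n) ≤ c * σ univ :=
              mul_le_mul' le_rfl (measure_mono (subset_univ _))
            _ ≤ c * (K * ENNReal.ofReal ((2⁻¹:ℝ)^α)) := mul_le_mul' le_rfl h1
            _ = (c * K) * ENNReal.ofReal ((2⁻¹:ℝ)^α) := (mul_assoc _ _ _).symm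
            _ = ENNReal.ofReal ((2⁻¹:ℝ)^α) := by rw [hcK, one_mul]
            _ ≤ ENNReal.ofReal (r^α) :=
                ENNReal.ofReal_le_ofReal (Real.rpow_le_rpow (by norm_num) hhalf.le hα.le)
  · exfalso
    push_neg at hex
    have hS : σ (⋃ n, F n) = 0 := measure_iUnion_null hex
    set N := toMeasurable σ (⋃ n, F n) with hN
    have hNzero : σ N = 0 := by rw [hN, measure_toMeasurable]; exact hS
    have hkey := h Nᶜ (measurableSet_toMeasurable σ _).compl (by rwa [compl_compl])
    set A := Nᶜ with hA
    have hAsub : ∀ m, A ⊆ (F m)ᶜ := fun m =>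
      compl_subset_compl.2 ((subset_iUnion F m).trans (subset_toMeasurable σ _))
    -- basic quantities
    set M := (σ univ).toReal with hM
    have hMpos : 0 < M := ENNReal.toReal_pos
      (fun h0 => hσ (Measure.measure_univ_eq_zero.1 h0)) (measure_ne_top σ _)
    set δ : ℕ → ℝ := fun m => (M / (m+1)) ^ α⁻¹ with hδdef
    have hδpos : ∀ m, 0 < δ m := fun m => Real.rpow_pos_of_pos (by positivity) _
    have hδtend : Tendsto δ atTop (𝓝 0) := by
      have h1 : Tendsto (fun m : ℕ => M / (m+1)) atTop (𝓝 0) := by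
        have := (tendsto_const_div_atTop_nhds_zero_nat M).comp (tendsto_add_atTop_nat 1)
        simpa [Function.comp_def, Nat.cast_add] using this
      exact tendsto_rpow_zero h1 (by positivity)
    -- choice of radii
    have key : ∀ (m : ℕ) (x : X), ∃ q : ℝ, 0 < q ∧ q ≤ δ m ∧
        (x ∈ A → ((m:ℝ≥0∞)+1) * ENNReal.ofReal (q ^ α) < σ (Metric.closedBall x q)) := by
      intro m x
      by_cases hx : x ∈ A
      · have hxF : x ∉ F m := fun hmem => (hAsub m hx) hmem
        rw [hFdef, mem_setOf_eq] at hxF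
        push_neg at hxF
        obtain ⟨q, hq0, hq2, hqgt⟩ := hxF
        have hle : ((m:ℝ≥0∞)+1) * ENNReal.ofReal ((q:ℝ)^α) ≤ σ univ :=
          le_trans hqgt.le (measure_mono (subset_univ _))
        have hle2 : ENNReal.ofReal ((q:ℝ)^α) ≤ σ univ / ((m:ℝ≥0∞)+1) := by
          rw [ENNReal.le_div_iff_mul_le (Or.inl (by simp)) (Or.inl (by simp))]
          rwa [mul_comm]
        have hle3 : (q:ℝ)^α ≤ M / (m+1) := by
          have h4 := ENNReal.toReal_mono
            (by simp [ENNReal.div_eq_top, measure_ne_top σ]) hle2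
          rw [ENNReal.toReal_ofReal (by positivity), ENNReal.toReal_div] at h4
          rw [hM]
          simpa [ENNReal.toReal_add] using h4
        have hqδ : (q:ℝ) ≤ δ m := by
          have := Real.rpow_le_rpow (by positivity) hle3 (by positivity : (0:ℝ) ≤ α⁻¹)
          rwa [Real.rpow_rpow_inv hq0.le hα.ne'] at this
        exact ⟨q, hq0, hqδ, fun _ => hqgt⟩
      · exact ⟨δ m, hδpos m, le_rfl, fun hx' => absurd hx' hx⟩
    choose r hrpos hrδ hrbig using key
    -- Vitali covering
    have vit : ∀ m, ∃ u ⊆ A, (u.PairwiseDisjoint fun a => Metric.closedBall a (r m a)) ∧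
        ∀ a ∈ A, ∃ b ∈ u, Metric.closedBall a (r m a) ⊆ Metric.closedBall b (4 * r m b) :=
      fun m => Vitali.exists_disjoint_subfamily_covering_enlargement_closedBall A
        (fun a => a) (r m) (δ m) (fun a _ => hrδ m a) 4 (by norm_num)
    choose u husub hudisj hucov using vit
    have hcnt : ∀ m, (u m).Countable := fun m =>
      (hudisj m).countable_of_nonempty_interior (fun b _ =>
        ((Metric.nonempty_ball).2 (hrpos m b)).mono Metric.ball_subset_interior_closedBall)
    haveI : ∀ m, Countable (u m) := fun m => (hcnt m).to_subtype
    set t : ∀ m : ℕ, u m → Set X := fun m b => Metric.closedBall (b:X) (4 * r m (b:X)) with ht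
    have hcov : ∀ m, A ⊆ ⋃ i, t m i := by
      intro m a ha
      obtain ⟨b, hbu, hsub⟩ := hucov m a ha
      exact mem_iUnion.2 ⟨⟨b, hbu⟩, hsub (Metric.mem_closedBall_self (hrpos m a).le)⟩
    have hdiam : ∀ m (i : u m), EMetric.diam (t m i) ≤ ENNReal.ofReal (8 * δ m) := by
      intro m i
      calc EMetric.diam (t m i) ≤ ENNReal.ofReal (2 * (4 * r m i)) :=
          ediam_closedBall_le _ (by have := (hrpos m i).le; linarith)
        _ ≤ ENNReal.ofReal (8 * δ m) := by
            apply ENNReal.ofReal_le_ofReal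
            have := hrδ m i
            linarith
    have h8δ : Tendsto (fun m => ENNReal.ofReal (8 * δ m)) atTop (𝓝 0) := by
      have := ENNReal.tendsto_ofReal (Tendsto.const_mul (8:ℝ) hδtend)
      simpa using this
    have main := Measure.hausdorffMeasure_le_liminf_tsum α A
      (fun m => ENNReal.ofReal (8 * δ m)) h8δ t
      (Eventually.of_forall (fun m => hdiam m)) (Eventually.of_forall hcov)
    -- bound each term
    set C : ℝ≥0∞ := ENNReal.ofReal ((8:ℝ)^α) * σ univ with hC
    have hterm : ∀ m, (∑' i : u m, EMetric.diam (t m i) ^ α) ≤ C / ((m:ℝ≥0∞)+1) := by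
      intro m
      have step1 : ∀ i : u m, EMetric.diam (t m i) ^ α ≤
          ENNReal.ofReal ((8:ℝ)^α) * (σ (Metric.closedBall (i:X) (r m i)) / ((m:ℝ≥0∞)+1)) := by
        intro i
        have hd : EMetric.diam (t m i) ≤ ENNReal.ofReal (8 * r m i) := by
          calc EMetric.diam (t m i) ≤ ENNReal.ofReal (2 * (4 * r m i)) :=
              ediam_closedBall_le _ (by have := (hrpos m (i:X)).le; linarith)
            _ = ENNReal.ofReal (8 * r m i) := by ring_nf
        have hbig := hrbig m i (husub m i.2)
        have hb2 : ENNReal.ofReal ((r m i) ^ α) ≤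
            σ (Metric.closedBall (i:X) (r m i)) / ((m:ℝ≥0∞)+1) := by
          rw [ENNReal.le_div_iff_mul_le (Or.inl (by simp)) (Or.inl (by simp))]
          rw [mul_comm]
          exact hbig.le
        calc EMetric.diam (t m i) ^ α ≤ ENNReal.ofReal (8 * r m i) ^ α :=
            ENNReal.rpow_le_rpow hd hα.le
          _ = ENNReal.ofReal ((8 * r m i) ^ α) := by
              rw [ENNReal.ofReal_rpow_of_pos (show (0:ℝ) < 8 * r m i by
                have := hrpos m (i:X); linarith)]
          _ = ENNReal.ofReal ((8:ℝ)^α) * ENNReal.ofReal ((r m i) ^ α) := by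
              rw [Real.mul_rpow (by norm_num) (hrpos m i).le,
                ENNReal.ofReal_mul (by positivity)]
          _ ≤ ENNReal.ofReal ((8:ℝ)^α) *
              (σ (Metric.closedBall (i:X) (r m i)) / ((m:ℝ≥0∞)+1)) :=
              mul_le_mul' le_rfl hb2
      have hdisj' : Pairwise (Function.onFun Disjoint
          (fun i : u m => Metric.closedBall (i:X) (r m i))) :=
        fun i j hij => hudisj m i.2 j.2 (fun h => hij (Subtype.ext h))
      have hsum : (∑' i : u m, σ (Metric.closedBall (i:X) (r m i))) ≤ σ univ := by
        rw [← measure_iUnion hdisj' (fun i => measurableSet_closedBall)]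
        exact measure_mono (subset_univ _)
      calc (∑' i : u m, EMetric.diam (t m i) ^ α)
          ≤ ∑' i : u m, ENNReal.ofReal ((8:ℝ)^α) *
            (σ (Metric.closedBall (i:X) (r m i)) / ((m:ℝ≥0∞)+1)) :=
            ENNReal.tsum_le_tsum step1
        _ = ENNReal.ofReal ((8:ℝ)^α) *
            ((∑' i : u m, σ (Metric.closedBall (i:X) (r m i))) / ((m:ℝ≥0∞)+1)) := by
            rw [ENNReal.tsum_mul_left]
            congr 1
            simp only [div_eq_mul_inv]
            rw [ENNReal.tsum_mul_right]
        _ ≤ ENNReal.ofReal ((8:ℝ)^α) * (σ univ / ((m:ℝ≥0∞)+1)) := by gcongr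
        _ = C / ((m:ℝ≥0∞)+1) := by rw [hC, mul_div_assoc]
    -- conclude μH[α] A = 0
    have hCtop : C ≠ ⊤ := ENNReal.mul_ne_top ENNReal.ofReal_ne_top (measure_ne_top σ _)
    have hCtend : Tendsto (fun m : ℕ => C / ((m:ℝ≥0∞)+1)) atTop (𝓝 0) := by
      have h1 : Tendsto (fun m : ℕ => ((m:ℝ≥0∞)+1)⁻¹) atTop (𝓝 0) := by
        have := ENNReal.tendsto_inv_nat_nhds_zero.comp (tendsto_add_atTop_nat 1)
        simpa [Function.comp_def, Nat.cast_add] using this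
      have h2 := ENNReal.Tendsto.const_mul h1 (Or.inr hCtop)
      simpa [div_eq_mul_inv] using h2
    have hμH : μH[α] A = 0 := by
      refine le_antisymm ?_ zero_le
      calc μH[α] A ≤ liminf (fun m => ∑' i : u m, EMetric.diam (t m i) ^ α) atTop := main
        _ ≤ liminf (fun m : ℕ => C / ((m:ℝ≥0∞)+1)) atTop :=
            liminf_le_liminf (Eventually.of_forall hterm)
        _ = 0 := hCtend.liminf_eq
    have hdim : dimH A ≤ ENNReal.ofReal α := by
      have := dimH_le_of_hausdorffMeasure_ne_top (s := A) (d := α.toNNReal)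
        (by rw [Real.coe_toNNReal _ hα.le, hμH]; exact ENNReal.zero_ne_top)
      simpa [ENNReal.ofReal] using this
    exact absurd hkey (not_lt.2 hdim)

/-- Upper dimension of a measure: `inf {dim_H A : A Borel, σ(Aᶜ) = 0}`. -/
def upperDimE (d : ℕ) (σ : Measure (EuclideanSpace ℝ (Fin d))) : ℝ≥0∞ :=
  ⨅ A : {A : Set (EuclideanSpace ℝ (Fin d)) // MeasurableSet A ∧ σ Aᶜ = 0}, dimH A.1

/-- For a nonzero finite positive measure `σ` on `ℝ^d`, the upper dimension
of `σ` equals the supremum of all `α ≥ 0` for which there exists a nonzero measure `σ̃ ≤ σ`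
with `σ̃(B_r(x)) ≤ r^α` for all `x` and all `0 < r ≤ 1`. -/
theorem statement12 (d : ℕ) (hd : 1 ≤ d) (σ : Measure (EuclideanSpace ℝ (Fin d)))
    (hfin : IsFiniteMeasure σ) (hne : σ ≠ 0) :
    upperDimE d σ =
      ⨆ p : {α : ℝ // 0 ≤ α ∧ ∃ σ' : Measure (EuclideanSpace ℝ (Fin d)),
          σ' ≠ 0 ∧ σ' ≤ σ ∧ ∀ (x : EuclideanSpace ℝ (Fin d)) (r : ℝ), 0 < r → r ≤ 1 →
            σ' (Metric.closedBall x r) ≤ ENNReal.ofReal (r ^ α)},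
        ENNReal.ofReal p.1 := by
  apply le_antisymm
  · by_contra hlt
    rw [not_le] at hlt
    obtain ⟨α, hα0, h1, h2⟩ := ENNReal.lt_iff_exists_real_btwn.1 hlt
    have hαpos : 0 < α := ENNReal.ofReal_pos.1 (lt_of_le_of_lt zero_le h1)
    have hall : ∀ A : Set (EuclideanSpace ℝ (Fin d)), MeasurableSet A → σ Aᶜ = 0 →
        ENNReal.ofReal α < dimH A := fun A hA hAc =>
      lt_of_lt_of_le h2 (iInf_le (fun A : {A : Set (EuclideanSpace ℝ (Fin d)) // MeasurableSet A ∧ σ Aᶜ = 0} =>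
        dimH A.1) ⟨A, hA, hAc⟩)
    obtain ⟨σ', h1', h2', h3'⟩ := exists_frostman_measure σ hne hαpos hall
    have hle : ENNReal.ofReal α ≤
        ⨆ p : {α : ℝ // 0 ≤ α ∧ ∃ σ' : Measure (EuclideanSpace ℝ (Fin d)),
          σ' ≠ 0 ∧ σ' ≤ σ ∧ ∀ (x : EuclideanSpace ℝ (Fin d)) (r : ℝ), 0 < r → r ≤ 1 →
            σ' (Metric.closedBall x r) ≤ ENNReal.ofReal (r ^ α)},
        ENNReal.ofReal p.1 :=
      le_iSup (fun p : {α : ℝ // 0 ≤ α ∧ ∃ σ' : Measure (EuclideanSpace ℝ (Fin d)),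
          σ' ≠ 0 ∧ σ' ≤ σ ∧ ∀ (x : EuclideanSpace ℝ (Fin d)) (r : ℝ), 0 < r → r ≤ 1 →
            σ' (Metric.closedBall x r) ≤ ENNReal.ofReal (r ^ α)} => ENNReal.ofReal p.1)
        ⟨α, hαpos.le, σ', h1', h2', h3'⟩
    exact absurd hle (not_le.2 h1)
  · refine iSup_le ?_
    rintro ⟨α, hα0, σ', hne', hle', hball⟩
    refine le_iInf ?_
    rintro ⟨A, hA, hAc⟩
    have hH := frostman_le_hausdorff σ' hα0 hball
    have hA0 : σ' A ≠ 0 := by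
      have h1 : σ' Aᶜ = 0 :=
        le_antisymm (le_trans (Measure.le_iff'.1 hle' Aᶜ) hAc.le) zero_le
      intro h0
      have huniv : σ' univ = 0 := by
        have h2 := measure_union_le (μ := σ') A Aᶜ
        rw [union_compl_self, h0, h1, add_zero] at h2
        exact le_antisymm h2 zero_le
      exact hne' (Measure.measure_univ_eq_zero.1 huniv)
    have hμ : μH[α] A ≠ 0 :=
      fun h0 => hA0 (le_antisymm (h0 ▸ Measure.le_iff'.1 hH A) zero_le)
    have hdim := le_dimH_of_hausdorffMeasure_ne_zero (s := A) (d := α.toNNReal)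
      (by rwa [Real.coe_toNNReal _ hα0])
    simpa [ENNReal.ofReal] using hdim
end
end

section
/- Let Q = (ℝ/ℤ)² be the flat 2-torus and let α ∈ (0,2). There is a constant c > 0 depending only on α such that: if σ is a positive measure on Q satisfying σ(B_r(x)) ≤ r^α for every x ∈ Q and every 0 < r ≤ 1, and if X₁,…,X_N ∈ Q and φ₁,…,φ_N ∈ (0,1] satisfy ∑ᵢ φᵢ = σ(Q), then W_per²( ∑ᵢ φᵢ δ_{Xᵢ}, σ ) ≥ c · ∑ᵢ φᵢ^{(α+2)/α}. -/
open MeasureTheory Filter Set ENNReal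

noncomputable section

instance fact1 : Fact ((0:ℝ) < 1) := ⟨one_pos⟩

/-- The flat 2-torus `Q = (ℝ/ℤ)²`. -/
abbrev Q2 : Type := AddCircle (1 : ℝ) × AddCircle (1 : ℝ)

/-- The geodesic (flat) distance on the 2-torus. -/
def dQ (p q : Q2) : ℝ := Real.sqrt (dist p.1 q.1 ^ 2 + dist p.2 q.2 ^ 2)

/-- The ball of radius `r` around `x` for the flat distance. -/
def ballQ (x : Q2) (r : ℝ) : Set Q2 := {y | dQ x y ≤ r}

/-- Squared periodic `2`-Wasserstein distance on the flat 2-torus. -/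
def W2perQ (ν₁ ν₂ : Measure Q2) : ℝ≥0∞ :=
  ⨅ (π : Measure (Q2 × Q2)) (_ : π.map Prod.fst = ν₁ ∧ π.map Prod.snd = ν₂),
    ∫⁻ p, ENNReal.ofReal (dQ p.1 p.2 ^ 2) ∂π

lemma measurableSet_ballQ (x : Q2) (r : ℝ) : MeasurableSet (ballQ x r) := by
  have hc : Continuous (fun y : Q2 => dQ x y) := by
    unfold dQ
    exact (((continuous_const.dist continuous_fst).pow 2).add
      ((continuous_const.dist continuous_snd).pow 2)).sqrt
  exact (isClosed_le hc continuous_const).measurableSet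

instance : MeasurableSingletonClass Q2 :=
  ⟨fun x => by
    rw [show ({x} : Set Q2) = {x.1} ×ˢ {x.2} by simp]
    exact (measurableSet_singleton x.1).prod (measurableSet_singleton x.2)⟩

lemma dQ_nonneg (p q : Q2) : 0 ≤ dQ p q := Real.sqrt_nonneg _

lemma sum_rpow_le {ι : Type*} (s : Finset ι) (f : ι → ℝ) (hf : ∀ i ∈ s, 0 ≤ f i)
    {p : ℝ} (hp : 1 ≤ p) : ∑ i ∈ s, f i ^ p ≤ (∑ i ∈ s, f i) ^ p := by
  have hS : 0 ≤ ∑ i ∈ s, f i := Finset.sum_nonneg hf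
  have h1 : ∀ i ∈ s, f i ^ p ≤ f i * (∑ j ∈ s, f j) ^ (p - 1) := by
    intro i hi
    rcases eq_or_lt_of_le (hf i hi) with h0 | h0
    · rw [← h0, Real.zero_rpow (by linarith)]
      positivity
    · have hle : f i ≤ ∑ j ∈ s, f j := Finset.single_le_sum hf hi
      calc f i ^ p = f i ^ (1 + (p - 1)) := by ring_nf
        _ = f i ^ (1:ℝ) * f i ^ (p - 1) := Real.rpow_add h0 _ _
        _ ≤ f i * (∑ j ∈ s, f j) ^ (p - 1) := by
            rw [Real.rpow_one]
            exact mul_le_mul_of_nonneg_left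
              (Real.rpow_le_rpow (le_of_lt h0) hle (by linarith)) (le_of_lt h0)
  calc ∑ i ∈ s, f i ^ p ≤ ∑ i ∈ s, f i * (∑ j ∈ s, f j) ^ (p - 1) :=
        Finset.sum_le_sum h1
    _ = (∑ i ∈ s, f i) * (∑ j ∈ s, f j) ^ (p - 1) := by rw [← Finset.sum_mul]
    _ = (∑ i ∈ s, f i) ^ p := by
        rw [← Real.rpow_one_add' hS (by linarith)]; ring_nf

lemma point_bound {ι : Type*} {α : ℝ} (hα0 : 0 < α) (hα2 : α < 2)
    (s : Finset ι) (hs : s.Nonempty) (φ : ι → ℝ) (hφ : ∀ i ∈ s, φ i ∈ Ioc (0:ℝ) 1) :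
    ∃ r : ℝ, 0 < r ∧ r ≤ 1 ∧
      (2:ℝ) ^ (-((α+2)/α)) * ∑ i ∈ s, φ i ^ ((α+2)/α) ≤
        r ^ 2 * ((∑ i ∈ s, φ i) - r ^ α) := by
  set p := (α+2)/α with hp
  have hp1 : 1 < p := by
    rw [hp, lt_div_iff₀ hα0]; linarith
  set Φ := ∑ i ∈ s, φ i with hΦ
  have hΦpos : 0 < Φ := Finset.sum_pos (fun i hi => (hφ i hi).1) hs
  have hsum_le : ∑ i ∈ s, φ i ^ p ≤ Φ ^ p :=
    sum_rpow_le s φ (fun i hi => (hφ i hi).1.le) hp1.le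
  by_cases hΦ2 : Φ ≤ 2
  · refine ⟨(Φ/2) ^ (1/α), Real.rpow_pos_of_pos (by linarith) _, ?_, ?_⟩
    · exact Real.rpow_le_one (by linarith) (by linarith) (by positivity)
    · have hb : (0:ℝ) ≤ Φ/2 := by linarith
      have hrα : ((Φ/2) ^ (1/α)) ^ α = Φ/2 := by
        rw [← Real.rpow_mul hb, one_div, inv_mul_cancel₀ (ne_of_gt hα0), Real.rpow_one]
      have hr2 : ((Φ/2) ^ (1/α)) ^ 2 = (Φ/2) ^ (2/α) := by
        rw [← Real.rpow_natCast ((Φ/2) ^ (1/α)) 2, ← Real.rpow_mul hb]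
        norm_num
        ring_nf
      rw [hrα, hr2]
      have key : (Φ/2) ^ (2/α) * (Φ - Φ/2) = (Φ/2) ^ p := by
        have : Φ - Φ/2 = Φ/2 := by ring
        rw [this]
        nth_rewrite 2 [← Real.rpow_one (Φ/2)]
        rw [← Real.rpow_add (by linarith), hp]
        congr 1
        field_simp
        ring
      rw [key]
      have hdiv : (Φ/2) ^ p = (2:ℝ)^(-p) * Φ ^ p := by
        rw [Real.div_rpow hΦpos.le (by norm_num), Real.rpow_neg (by norm_num)]
        ring
      rw [hdiv]
      exact mul_le_mul_of_nonneg_left hsum_le (by positivity)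
  · refine ⟨1, one_pos, le_refl 1, ?_⟩
    push_neg at hΦ2
    have h1 : ∑ i ∈ s, φ i ^ p ≤ Φ := by
      rw [hΦ]
      refine Finset.sum_le_sum fun i hi => ?_
      have hi' := hφ i hi
      calc φ i ^ p ≤ φ i ^ (1:ℝ) :=
            Real.rpow_le_rpow_of_exponent_ge hi'.1 hi'.2 hp1.le
        _ = φ i := Real.rpow_one _
    have h2 : (2:ℝ) ^ (-p) ≤ 1/2 := by
      have : (2:ℝ) ^ (-p) ≤ (2:ℝ) ^ (-1:ℝ) :=
        Real.rpow_le_rpow_of_exponent_le (by norm_num) (by linarith)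
      rw [Real.rpow_neg_one] at this
      linarith
    have hsumnn : 0 ≤ ∑ i ∈ s, φ i ^ p :=
      Finset.sum_nonneg fun i hi => Real.rpow_nonneg (hφ i hi).1.le _
    have one_alpha : (1:ℝ) ^ α = 1 := Real.one_rpow α
    rw [one_alpha, one_pow, one_mul]
    calc (2:ℝ)^(-p) * ∑ i ∈ s, φ i ^ p ≤ (1/2) * Φ := by
          apply mul_le_mul h2 h1 hsumnn (by norm_num)
      _ ≤ Φ - 1 := by linarith

/-- non-standard quantization bound. For `α ∈ (0,2)` there is `c > 0`
depending only on `α` such that, whenever `σ(B_r(x)) ≤ r^α` for all `x` and `0 < r ≤ 1`, and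
`∑ᵢ φᵢ = σ(Q)` with `φᵢ ∈ (0,1]`, one has
`W_per²(∑ᵢ φᵢ δ_{Xᵢ}, σ) ≥ c ∑ᵢ φᵢ^{(α+2)/α}`. -/
theorem statement13 (α : ℝ) (hα : α ∈ Ioo (0:ℝ) 2) :
    ∃ c : ℝ, 0 < c ∧ ∀ σ : Measure Q2, IsFiniteMeasure σ →
      (∀ (x : Q2) (r : ℝ), 0 < r → r ≤ 1 → σ (ballQ x r) ≤ ENNReal.ofReal (r ^ α)) →
      ∀ (N : ℕ) (X : Fin N → Q2) (φ : Fin N → ℝ),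
        (∀ i, φ i ∈ Ioc (0:ℝ) 1) → (∑ i, φ i) = (σ Set.univ).toReal →
        ENNReal.ofReal (c * ∑ i, φ i ^ ((α + 2)/α)) ≤
          W2perQ (∑ i, ENNReal.ofReal (φ i) • Measure.dirac (X i)) σ := by
  classical
  obtain ⟨hα0, hα2⟩ := hα
  refine ⟨(2:ℝ)^(-((α+2)/α)), Real.rpow_pos_of_pos two_pos _, ?_⟩
  intro σ hσfin hball N X φ hφ hsum
  rw [W2perQ]
  refine le_iInf fun π => le_iInf fun hπ => ?_
  obtain ⟨hπ1, hπ2⟩ := hπ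
  set S : Finset Q2 := Finset.image X Finset.univ with hS
  set T : Q2 → Finset (Fin N) := fun x => Finset.univ.filter (fun i => X i = x) with hT
  have hchoice : ∀ x ∈ S, ∃ r : ℝ, 0 < r ∧ r ≤ 1 ∧
      (2:ℝ)^(-((α+2)/α)) * ∑ i ∈ T x, φ i ^ ((α+2)/α) ≤
        r^2 * ((∑ i ∈ T x, φ i) - r ^ α) := by
    intro x hx
    obtain ⟨i, _, hXi⟩ := Finset.mem_image.mp hx
    exact point_bound hα0 hα2 (T x) ⟨i, by simp [hT, hXi]⟩ φ (fun j _ => hφ j)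
  choose! r hr0 hr1 hrkey using hchoice
  set A : Q2 → Set (Q2 × Q2) := fun x => ({x} : Set Q2) ×ˢ (ballQ x (r x))ᶜ with hA
  have hAmeas : ∀ x, MeasurableSet (A x) := fun x =>
    (measurableSet_singleton x).prod (measurableSet_ballQ x (r x)).compl
  -- (a) first marginal on {x}
  have marg1 : ∀ x : Q2, π (({x} : Set Q2) ×ˢ (univ : Set Q2))
      = ENNReal.ofReal (∑ i ∈ T x, φ i) := by
    intro x
    have h1 : ({x} : Set Q2) ×ˢ (univ : Set Q2) = Prod.fst ⁻¹' {x} := Set.prod_univ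
    rw [h1, ← Measure.map_apply measurable_fst (measurableSet_singleton x), hπ1]
    rw [Measure.finset_sum_apply]
    have h2 : ∀ i : Fin N, (ENNReal.ofReal (φ i) • Measure.dirac (X i)) ({x} : Set Q2)
        = if X i = x then ENNReal.ofReal (φ i) else 0 := by
      intro i
      rw [Measure.smul_apply, smul_eq_mul,
        Measure.dirac_apply' _ (measurableSet_singleton x)]
      by_cases h : X i = x
      · simp [h]
      · simp [Set.indicator_apply, h]
    simp_rw [h2]
    rw [ENNReal.ofReal_sum_of_nonneg (fun i _ => (hφ i).1.le)]
    simp only [hT]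
    exact (Finset.sum_filter _ _).symm
  -- (b) mass near x is small
  have small : ∀ x ∈ S, π (({x} : Set Q2) ×ˢ ballQ x (r x)) ≤ ENNReal.ofReal ((r x) ^ α) := by
    intro x hx
    have h1 : ({x} : Set Q2) ×ˢ ballQ x (r x) ⊆ Prod.snd ⁻¹' ballQ x (r x) := by
      rintro ⟨a, b⟩ ⟨-, hb⟩; exact hb
    calc π (({x} : Set Q2) ×ˢ ballQ x (r x)) ≤ π (Prod.snd ⁻¹' ballQ x (r x)) :=
          measure_mono h1
      _ = σ (ballQ x (r x)) := by
          rw [← Measure.map_apply measurable_snd (measurableSet_ballQ x (r x)), hπ2]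
      _ ≤ ENNReal.ofReal ((r x) ^ α) := hball x (r x) (hr0 x hx) (hr1 x hx)
  -- (c) escaping mass
  have escape : ∀ x ∈ S, ENNReal.ofReal (∑ i ∈ T x, φ i) - ENNReal.ofReal ((r x)^α)
      ≤ π (A x) := by
    intro x hx
    rw [tsub_le_iff_right, ← marg1 x]
    have hsub : ({x} : Set Q2) ×ˢ (univ : Set Q2)
        ⊆ A x ∪ (({x} : Set Q2) ×ˢ ballQ x (r x)) := by
      rintro ⟨a, b⟩ ⟨ha, -⟩
      by_cases hb : b ∈ ballQ x (r x)
      · exact Or.inr ⟨ha, hb⟩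
      · exact Or.inl ⟨ha, hb⟩
    calc π (({x} : Set Q2) ×ˢ (univ : Set Q2))
        ≤ π (A x ∪ (({x} : Set Q2) ×ˢ ballQ x (r x))) := measure_mono hsub
      _ ≤ π (A x) + π (({x} : Set Q2) ×ˢ ballQ x (r x)) := measure_union_le _ _
      _ ≤ π (A x) + ENNReal.ofReal ((r x)^α) := add_le_add_right (small x hx) _
  -- (d) pointwise lower bound of the cost
  have hpt : ∀ q : Q2 × Q2,
      ∑ x ∈ S, (A x).indicator (fun _ => ENNReal.ofReal ((r x)^2)) q
        ≤ ENNReal.ofReal (dQ q.1 q.2 ^ 2) := by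
    intro q
    have step : ∀ x ∈ S, (A x).indicator (fun _ => ENNReal.ofReal ((r x)^2)) q
        ≤ if x = q.1 then ENNReal.ofReal (dQ q.1 q.2 ^ 2) else 0 := by
      intro x hx
      by_cases hxq : x = q.1
      · subst hxq
        rw [if_pos rfl]
        by_cases hq : q ∈ A q.1
        · rw [Set.indicator_of_mem hq]
          obtain ⟨hq1, hq2⟩ := hq
          have hd : r q.1 < dQ q.1 q.2 := by
            have h' : ¬ dQ q.1 q.2 ≤ r q.1 := hq2
            linarith [not_le.mp h']
          apply ENNReal.ofReal_le_ofReal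
          have h0 : 0 ≤ r q.1 := (hr0 q.1 hx).le
          nlinarith [dQ_nonneg q.1 q.2]
        · rw [Set.indicator_of_notMem hq]; exact zero_le
      · rw [if_neg hxq, Set.indicator_of_notMem]
        intro hq
        obtain ⟨hq1, -⟩ := hq
        exact hxq (Set.mem_singleton_iff.mp hq1).symm
    calc ∑ x ∈ S, (A x).indicator (fun _ => ENNReal.ofReal ((r x)^2)) q
        ≤ ∑ x ∈ S, if x = q.1 then ENNReal.ofReal (dQ q.1 q.2 ^ 2) else 0 :=
          Finset.sum_le_sum step
      _ = if q.1 ∈ S then ENNReal.ofReal (dQ q.1 q.2 ^ 2) else 0 := by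
          rw [Finset.sum_ite_eq' S q.1 (fun _ => ENNReal.ofReal (dQ q.1 q.2 ^ 2))]
      _ ≤ ENNReal.ofReal (dQ q.1 q.2 ^ 2) := by split <;> simp
  -- (e) lintegral lower bound
  have lint : ∑ x ∈ S, ENNReal.ofReal ((r x)^2) * π (A x)
      ≤ ∫⁻ q, ENNReal.ofReal (dQ q.1 q.2 ^ 2) ∂π := by
    have h1 : ∑ x ∈ S, ENNReal.ofReal ((r x)^2) * π (A x)
        = ∫⁻ q, ∑ x ∈ S, (A x).indicator (fun _ => ENNReal.ofReal ((r x)^2)) q ∂π := by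
      rw [lintegral_finset_sum _ (fun x _ => (measurable_const.indicator (hAmeas x)))]
      congr 1
      ext x
      rw [lintegral_indicator_const (hAmeas x)]
    rw [h1]
    exact lintegral_mono hpt
  -- (f) combine
  have split : (∑ i, φ i ^ ((α+2)/α)) = ∑ x ∈ S, ∑ i ∈ T x, φ i ^ ((α+2)/α) :=
    (Finset.sum_fiberwise_of_maps_to (fun i _ => Finset.mem_image_of_mem X (Finset.mem_univ i)) _).symm
  calc ENNReal.ofReal ((2:ℝ)^(-((α+2)/α)) * ∑ i, φ i ^ ((α+2)/α))
      = ∑ x ∈ S, ENNReal.ofReal ((2:ℝ)^(-((α+2)/α)) * ∑ i ∈ T x, φ i ^ ((α+2)/α)) := by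
        rw [split, Finset.mul_sum, ENNReal.ofReal_sum_of_nonneg]
        intro x hx
        have : 0 ≤ ∑ i ∈ T x, φ i ^ ((α+2)/α) :=
          Finset.sum_nonneg fun i _ => Real.rpow_nonneg (hφ i).1.le _
        positivity
    _ ≤ ∑ x ∈ S, ENNReal.ofReal ((r x)^2 * ((∑ i ∈ T x, φ i) - (r x)^α)) :=
        Finset.sum_le_sum fun x hx => ENNReal.ofReal_le_ofReal (hrkey x hx)
    _ = ∑ x ∈ S, ENNReal.ofReal ((r x)^2) *
          (ENNReal.ofReal (∑ i ∈ T x, φ i) - ENNReal.ofReal ((r x)^α)) := by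
        refine Finset.sum_congr rfl fun x hx => ?_
        rw [ENNReal.ofReal_mul (by positivity), ENNReal.ofReal_sub _ (Real.rpow_nonneg (hr0 x hx).le _)]
    _ ≤ ∑ x ∈ S, ENNReal.ofReal ((r x)^2) * π (A x) :=
        Finset.sum_le_sum fun x hx => mul_le_mul_right (escape x hx) _
    _ ≤ ∫⁻ q, ENNReal.ofReal (dQ q.1 q.2 ^ 2) ∂π := lint
end
end

section
/- There exist universal constants c, C > 0 such that for all Φ, T, λ > 0, c · ( T + λΦ³/(1+λT) ) ≤ E(Φ,T,λ) ≤ C · ( T + λΦ³/(1+λT) ). -/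
open MeasureTheory Filter Set ENNReal

noncomputable section

/-- `T_λ = T + 1/λ`. -/
def Tlam (T lam : ℝ) : ℝ := T + 1/lam

/-- Admissibility of a Lagrangian pair `(X, D)` in the class `𝒞(Φ, Tl, X̄)`: for a.e.
`x ∈ [-Φ/2, Φ/2]`, the curve `t ↦ X(t,x)` is absolutely continuous on `[0,Tl]` with
(integrable) derivative `D(·,x)`, starts at `X̄` and ends at `x`. -/
structure LagAdm (Φ Tl Xbar : ℝ) (X D : ℝ → ℝ → ℝ) : Prop where
  measX : Measurable (Function.uncurry X)
  measD : Measurable (Function.uncurry D)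
  curves : ∀ᵐ x ∂(volume.restrict (Icc (-(Φ/2)) (Φ/2))),
    X 0 x = Xbar ∧ X Tl x = x ∧
    IntegrableOn (fun t => D t x) (Icc 0 Tl) ∧
    ∀ t ∈ Icc 0 Tl, X t x = Xbar + ∫ s in (0:ℝ)..t, D s x

/-- Multiplicity `φ_X(y,t)`: the Lebesgue measure of `{x ∈ [-Φ/2,Φ/2] : X(t,x) = y}`. -/
def mult (Φ : ℝ) (X : ℝ → ℝ → ℝ) (y t : ℝ) : ℝ≥0∞ :=
  volume {x | x ∈ Icc (-(Φ/2)) (Φ/2) ∧ X t x = y}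

/-- The Lagrangian energy `𝓛_{λ,T,Φ}(X) = ∫₀^T ∫ 1/φ_X(X(t,x),t) dx dt
+ ∫₀^{T_λ} ∫ |∂_t X|² dx dt` (with the convention `1/0 = +∞`). -/
def lagEnergy (Φ T lam : ℝ) (X D : ℝ → ℝ → ℝ) : ℝ≥0∞ :=
  (∫⁻ t in Ioo (0:ℝ) T, ∫⁻ x in Icc (-(Φ/2)) (Φ/2), (mult Φ X (X t x) t)⁻¹) +
    ∫⁻ t in Ioo (0:ℝ) (Tlam T lam), ∫⁻ x in Icc (-(Φ/2)) (Φ/2),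
      ENNReal.ofReal ((D t x)^2)

/-- `E(Φ,T,λ,X̄)`: the infimum of the Lagrangian energy over `𝒞(Φ,T_λ,X̄)`. -/
def lagE (Φ T lam Xbar : ℝ) : ℝ≥0∞ :=
  ⨅ (X : ℝ → ℝ → ℝ) (D : ℝ → ℝ → ℝ) (_ : LagAdm Φ (Tlam T lam) Xbar X D),
    lagEnergy Φ T lam X D

namespace S16

def gmult (a b : ℝ) (X : ℝ → ℝ → ℝ) (y t : ℝ) : ℝ≥0∞ :=
  volume {x | x ∈ Ico a b ∧ X t x = y}

lemma gmult_meas {a b : ℝ} {X : ℝ → ℝ → ℝ} (hX : Measurable (Function.uncurry X)) :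
    Measurable fun p : ℝ × ℝ => gmult a b X p.1 p.2 := by
  have hs : MeasurableSet {q : (ℝ × ℝ) × ℝ | q.2 ∈ Ico a b ∧ X q.1.2 q.2 = q.1.1} := by
    apply MeasurableSet.inter
    · exact measurable_snd measurableSet_Ico
    · exact measurableSet_eq_fun
        (hX.comp ((measurable_fst.snd).prodMk measurable_snd))
        (measurable_fst.fst)
  exact measurable_measure_prodMk_left hs

lemma cong_integrand_meas {a b : ℝ} {X : ℝ → ℝ → ℝ}
    (hX : Measurable (Function.uncurry X)) :
    Measurable fun p : ℝ × ℝ => (gmult a b X (X p.1 p.2) p.1)⁻¹ :=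
  ((gmult_meas hX).comp (hX.prodMk measurable_fst)).inv

lemma cong_integrand_meas_x {a b : ℝ} {X : ℝ → ℝ → ℝ} (t : ℝ)
    (hX : Measurable (Function.uncurry X)) :
    Measurable fun x : ℝ => (gmult a b X (X t x) t)⁻¹ :=
  (cong_integrand_meas hX).comp (measurable_const.prodMk measurable_id)

lemma cong_inner_meas {a b c d : ℝ} {X : ℝ → ℝ → ℝ}
    (hX : Measurable (Function.uncurry X)) :
    Measurable fun t : ℝ => ∫⁻ x in Ico c d, (gmult a b X (X t x) t)⁻¹ :=
  Measurable.lintegral_prod_right (f := fun t x => (gmult a b X (X t x) t)⁻¹)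
    (cong_integrand_meas hX)

lemma kin_inner_meas {c d : ℝ} {D : ℝ → ℝ → ℝ}
    (hD : Measurable (Function.uncurry D)) :
    Measurable fun t : ℝ => ∫⁻ x in Ico c d, ENNReal.ofReal ((D t x)^2) :=
  Measurable.lintegral_prod_right (f := fun t x => ENNReal.ofReal ((D t x)^2))
    ((hD.pow_const 2).ennreal_ofReal)

lemma lint_split {a b c : ℝ} (hab : a ≤ b) (hbc : b < c) (f : ℝ → ℝ≥0∞) :
    ∫⁻ t in Ioo a c, f t = (∫⁻ t in Ioo a b, f t) + ∫⁻ t in Ioo b c, f t := by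
  rw [← Ioc_union_Ioo_eq_Ioo hab hbc,
    lintegral_union measurableSet_Ioo (by
      refine Set.disjoint_left.2 fun t ht ht' => ?_
      exact absurd ht'.1 (not_lt.2 ht.2)),
    Measure.restrict_congr_set (MeasureTheory.Ioo_ae_eq_Ioc (a := a) (b := b)).symm]

lemma lint_split_x {a b c : ℝ} (hab : a ≤ b) (hbc : b ≤ c) (f : ℝ → ℝ≥0∞) :
    ∫⁻ t in Ico a c, f t = (∫⁻ t in Ico a b, f t) + ∫⁻ t in Ico b c, f t := by
  rw [← Ico_union_Ico_eq_Ico hab hbc,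
    lintegral_union measurableSet_Ico (by
      refine Set.disjoint_left.2 fun t ht ht' => ?_
      exact absurd ht.2 (not_lt.2 ht'.1))]

lemma setLIntegral_le_of_bound {s : Set ℝ} (f : ℝ → ℝ≥0∞) (c : ℝ≥0∞)
    (h : ∀ t ∈ s, f t ≤ c) : ∫⁻ t in s, f t ≤ c * volume s := by
  calc ∫⁻ t in s, f t ≤ ∫⁻ _t in s, c := setLIntegral_mono measurable_const h
    _ = c * volume s := setLIntegral_const s c

lemma inv_mul_width {w W r : ℝ} (hw : 0 < w) (hr : 0 ≤ r) (hW : W = r * w) :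
    (ENNReal.ofReal w)⁻¹ * ENNReal.ofReal W = ENNReal.ofReal r := by
  rw [hW, ENNReal.ofReal_mul hr, mul_comm (ENNReal.ofReal r) _, ← mul_assoc,
    ENNReal.inv_mul_cancel (by simp [hw]) (by simp), one_mul]

def acoef : ℕ → ℝ
  | 0 => 0
  | n + 1 => 3/32 + 3/4 * acoef n

lemma acoef_nonneg : ∀ n, 0 ≤ acoef n
  | 0 => le_refl _
  | n + 1 => by have := acoef_nonneg n; rw [acoef]; linarith

lemma acoef_le : ∀ n, acoef n ≤ 3/8
  | 0 => by norm_num [acoef]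
  | n + 1 => by have := acoef_le n; rw [acoef]; linarith


lemma Tlam_pos {T lam : ℝ} (hT : 0 < T) (hlam : 0 < lam) : 0 < Tlam T lam := by
  have : 0 < 1/lam := by positivity
  unfold Tlam; linarith

/-- key algebraic identity -/
lemma ident {Φ T lam : ℝ} (hT : 0 < T) (hlam : 0 < lam) :
    lam * Φ^3 / (1 + lam * T) = Φ^3 / Tlam T lam := by
  unfold Tlam
  have h1 : (1 : ℝ) + lam * T > 0 := by positivity
  field_simp
  ring

lemma cong_lower {Φ T : ℝ} (hΦ : 0 < Φ) (hT : 0 < T) (X : ℝ → ℝ → ℝ) :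
    ENNReal.ofReal T ≤
      ∫⁻ t in Ioo (0:ℝ) T, ∫⁻ x in Icc (-(Φ/2)) (Φ/2), (mult Φ X (X t x) t)⁻¹ := by
  have hIcc : volume (Icc (-(Φ/2)) (Φ/2)) = ENNReal.ofReal Φ := by
    rw [Real.volume_Icc]; ring_nf
  have hmult : ∀ y t, mult Φ X y t ≤ ENNReal.ofReal Φ := by
    intro y t
    rw [← hIcc]
    exact measure_mono (fun x hx => hx.1)
  have hinner : ∀ t : ℝ,
      (1 : ℝ≥0∞) ≤ ∫⁻ x in Icc (-(Φ/2)) (Φ/2), (mult Φ X (X t x) t)⁻¹ := by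
    intro t
    calc (1 : ℝ≥0∞) = (ENNReal.ofReal Φ)⁻¹ * volume (Icc (-(Φ/2)) (Φ/2)) := by
          rw [hIcc, ENNReal.inv_mul_cancel (by simp [hΦ]) (by simp)]
      _ = ∫⁻ _x in Icc (-(Φ/2)) (Φ/2), (ENNReal.ofReal Φ)⁻¹ := (setLIntegral_const _ _).symm
      _ ≤ _ := lintegral_mono fun x => ENNReal.inv_le_inv' (hmult _ _)
  calc ENNReal.ofReal T = ∫⁻ _t in Ioo (0:ℝ) T, (1:ℝ≥0∞) := by
        rw [setLIntegral_const, one_mul, Real.volume_Ioo, sub_zero]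
    _ ≤ _ := lintegral_mono fun t => hinner t

lemma kin_lower_x {Tl : ℝ} (hTl : 0 < Tl) (f : ℝ → ℝ) (x : ℝ)
    (hint : IntegrableOn f (Icc 0 Tl)) (hx : x = ∫ s in (0:ℝ)..Tl, f s)
    (hmeas : Measurable f) :
    ENNReal.ofReal (x^2) ≤ ENNReal.ofReal Tl * ∫⁻ t in Ioo (0:ℝ) Tl, ENNReal.ofReal ((f t)^2) := by
  have hint' : IntegrableOn f (Ioc 0 Tl) := hint.mono_set Ioc_subset_Icc_self
  set A := ∫⁻ s in Ioc (0:ℝ) Tl, ENNReal.ofReal ((f s)^2) with hA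
  set I := ∫⁻ s in Ioc (0:ℝ) Tl, ENNReal.ofReal |f s| with hI
  set M := ENNReal.ofReal Tl with hM
  have habs : |x| ≤ ∫ s in Ioc (0:ℝ) Tl, |f s| := by
    rw [← intervalIntegral.integral_of_le hTl.le, hx]
    exact intervalIntegral.abs_integral_le_integral_abs hTl.le
  have h1 : ENNReal.ofReal (∫ s in Ioc (0:ℝ) Tl, |f s|) = I :=
    ofReal_integral_eq_lintegral_ofReal hint'.abs
      (Filter.Eventually.of_forall fun s => abs_nonneg _)
  have hCS : I ≤ A ^ ((1:ℝ)/2) * M ^ ((1:ℝ)/2) := by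
    have conj : Real.HolderConjugate 2 2 := by constructor <;> norm_num
    have hH := ENNReal.lintegral_mul_le_Lp_mul_Lq (volume.restrict (Ioc (0:ℝ) Tl)) conj
      (f := fun s => ENNReal.ofReal |f s|) (g := fun _ => 1)
      (hmeas.abs.ennreal_ofReal.aemeasurable) aemeasurable_const
    simp only [Pi.mul_apply, mul_one, ENNReal.one_rpow] at hH
    have h2 : ∀ s : ℝ, (ENNReal.ofReal |f s|) ^ (2:ℝ) = ENNReal.ofReal ((f s)^2) := by
      intro s
      rw [ENNReal.ofReal_rpow_of_nonneg (abs_nonneg _) (by norm_num)]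
      congr 1
      rw [Real.rpow_two, sq_abs]
    have h3 : (∫⁻ s in Ioc (0:ℝ) Tl, (ENNReal.ofReal |f s|) ^ (2:ℝ)) = A :=
      lintegral_congr fun s => h2 s
    have h4 : (∫⁻ _s in Ioc (0:ℝ) Tl, (1:ℝ≥0∞)) = M := by
      rw [setLIntegral_const, one_mul, Real.volume_Ioc, sub_zero]
    rw [h3, h4] at hH
    exact hH
  have hsq : I * I ≤ A * M := by
    calc I * I ≤ (A ^ ((1:ℝ)/2) * M ^ ((1:ℝ)/2)) * (A ^ ((1:ℝ)/2) * M ^ ((1:ℝ)/2)) :=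
          mul_le_mul' hCS hCS
      _ = (A ^ ((1:ℝ)/2) * A ^ ((1:ℝ)/2)) * (M ^ ((1:ℝ)/2) * M ^ ((1:ℝ)/2)) := by ring
      _ = A * M := by
          rw [← ENNReal.rpow_add_of_nonneg _ _ (by norm_num) (by norm_num),
            ← ENNReal.rpow_add_of_nonneg _ _ (by norm_num) (by norm_num)]
          norm_num
  have hIooIoc : ∫⁻ s in Ioo (0:ℝ) Tl, ENNReal.ofReal ((f s)^2) = A := by
    rw [hA, Measure.restrict_congr_set MeasureTheory.Ioo_ae_eq_Ioc]
  rw [hIooIoc]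
  calc ENNReal.ofReal (x^2) = ENNReal.ofReal |x| * ENNReal.ofReal |x| := by
        rw [← ENNReal.ofReal_mul (abs_nonneg _), ← sq_abs]; ring_nf
    _ ≤ I * I := by
        have : ENNReal.ofReal |x| ≤ I := by
          rw [← h1]; exact ENNReal.ofReal_le_ofReal habs
        exact mul_le_mul' this this
    _ ≤ A * M := hsq
    _ = M * A := mul_comm _ _

lemma lagE_lower {Φ T lam : ℝ} (hΦ : 0 < Φ) (hT : 0 < T) (hlam : 0 < lam) :
    ENNReal.ofReal ((1/64) * (T + lam * Φ^3 / (1 + lam * T))) ≤ lagE Φ T lam 0 := by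
  have hTl : 0 < Tlam T lam := Tlam_pos hT hlam
  set Tl := Tlam T lam with hTldef
  set M := ENNReal.ofReal Tl with hM
  have hM0 : M ≠ 0 := by simp [hM, hTl]
  have hMtop : M ≠ ⊤ := by simp [hM]
  rw [lagE]
  refine le_iInf fun X => le_iInf fun D => le_iInf fun hadm => ?_
  have key : ENNReal.ofReal (T + Φ^3/(64 * Tl)) ≤ lagEnergy Φ T lam X D := by
    rw [lagEnergy]
    have h1 : ENNReal.ofReal T ≤
        ∫⁻ t in Ioo (0:ℝ) T, ∫⁻ x in Icc (-(Φ/2)) (Φ/2), (mult Φ X (X t x) t)⁻¹ :=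
      cong_lower hΦ hT X
    have h2 : ENNReal.ofReal (Φ^3/(64 * Tl)) ≤
        ∫⁻ t in Ioo (0:ℝ) Tl, ∫⁻ x in Icc (-(Φ/2)) (Φ/2), ENNReal.ofReal ((D t x)^2) := by
      have hmeasF : Measurable (Function.uncurry fun t x => ENNReal.ofReal ((D t x)^2)) := by
        have : Measurable fun p : ℝ × ℝ => ENNReal.ofReal ((Function.uncurry D p)^2) :=
          (hadm.measD.pow_const 2).ennreal_ofReal
        exact this
      have hswap : (∫⁻ t in Ioo (0:ℝ) Tl, ∫⁻ x in Icc (-(Φ/2)) (Φ/2),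
            ENNReal.ofReal ((D t x)^2))
          = ∫⁻ x in Icc (-(Φ/2)) (Φ/2), ∫⁻ t in Ioo (0:ℝ) Tl,
            ENNReal.ofReal ((D t x)^2) :=
        lintegral_lintegral_swap hmeasF.aemeasurable
      rw [hswap]
      set G := fun x => ∫⁻ t in Ioo (0:ℝ) Tl, ENNReal.ofReal ((D t x)^2) with hG
      have hae : ∀ᵐ x ∂(volume.restrict (Icc (-(Φ/2)) (Φ/2))),
          ENNReal.ofReal (x^2) * M⁻¹ ≤ G x := by
        filter_upwards [hadm.curves] with x hx
        obtain ⟨-, hXend, hint, hid⟩ := hx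
        have hxeq : x = ∫ s in (0:ℝ)..Tl, D s x := by
          have := hid Tl ⟨hTl.le, le_refl _⟩
          rw [hXend] at this
          linarith [this]
        have hmf : Measurable fun t => D t x :=
          hadm.measD.comp (measurable_id.prodMk measurable_const)
        have := kin_lower_x hTl (fun t => D t x) x hint hxeq hmf
        calc ENNReal.ofReal (x^2) * M⁻¹ ≤ (M * G x) * M⁻¹ := mul_le_mul_left this _
          _ = G x * (M * M⁻¹) := by ring
          _ = G x := by rw [ENNReal.mul_inv_cancel hM0 hMtop, mul_one]
      have hsub : Icc (Φ/4) (Φ/2) ⊆ Icc (-(Φ/2)) (Φ/2) := by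
        apply Icc_subset_Icc <;> linarith
      have hae' : ∀ᵐ x ∂(volume.restrict (Icc (Φ/4) (Φ/2))),
          ENNReal.ofReal (x^2) * M⁻¹ ≤ G x :=
        ae_restrict_of_ae_restrict_of_subset hsub hae
      calc ENNReal.ofReal (Φ^3/(64 * Tl))
          = ENNReal.ofReal ((Φ/2)^2/(4:ℝ)) * M⁻¹ * volume (Icc (Φ/4) (Φ/2)) := by
            have hreal : Φ^3/(64*Tl) = ((Φ/2)^2/(4:ℝ)) * Tl⁻¹ * (Φ/2 - Φ/4) := by
              field_simp; ring
            rw [Real.volume_Icc, hreal, ENNReal.ofReal_mul (by positivity),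
              ENNReal.ofReal_mul (by positivity), ENNReal.ofReal_inv_of_pos hTl, hM]
        _ = ∫⁻ _x in Icc (Φ/4) (Φ/2), ENNReal.ofReal ((Φ/2)^2/(4:ℝ)) * M⁻¹ :=
            (setLIntegral_const _ _).symm
        _ ≤ ∫⁻ x in Icc (Φ/4) (Φ/2), ENNReal.ofReal (x^2) * M⁻¹ := by
            apply setLIntegral_mono_ae
            · exact ((by fun_prop : Measurable fun x : ℝ => ENNReal.ofReal (x^2) * M⁻¹)).aemeasurable
            · filter_upwards with x hx
              apply mul_le_mul_left
              apply ENNReal.ofReal_le_ofReal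
              have h4 : Φ/4 ≤ x := hx.1
              nlinarith [hx.2]
        _ ≤ ∫⁻ x in Icc (Φ/4) (Φ/2), G x := lintegral_mono_ae hae'
        _ ≤ ∫⁻ x in Icc (-(Φ/2)) (Φ/2), G x := lintegral_mono_set hsub
    calc ENNReal.ofReal (T + Φ^3/(64 * Tl))
        = ENNReal.ofReal T + ENNReal.ofReal (Φ^3/(64 * Tl)) := by
          rw [ENNReal.ofReal_add hT.le (by positivity)]
      _ ≤ _ := add_le_add h1 h2
  refine le_trans (ENNReal.ofReal_le_ofReal ?_) key
  rw [ident hT hlam, ← hTldef]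
  have : Φ^3/(64*Tl) = (1/64) * (Φ^3/Tl) := by ring
  nlinarith [hT, div_nonneg (by positivity : (0:ℝ) ≤ Φ^3) hTl.le]


/-- Base case construction: hold at `xc` during `[t₀, t₀+T]`, then spread linearly. -/
theorem base_case (lam : ℝ) (hlam : 0 < lam) (Φ T t₀ xc : ℝ) (hΦ : 0 < Φ) (hT : 0 < T) :
    ∃ X D : ℝ → ℝ → ℝ,
      Measurable (Function.uncurry X) ∧ Measurable (Function.uncurry D) ∧
      (∀ x ∈ Ico (xc - Φ/2) (xc + Φ/2),
        IntegrableOn (fun t => D t x) (Icc t₀ (t₀ + T + 1/lam)) ∧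
        (∀ t ∈ Icc t₀ (t₀ + T + 1/lam), X t x = xc + ∫ s in t₀..t, D s x) ∧
        X (t₀ + T + 1/lam) x = x) ∧
      (∫⁻ t in Ioo t₀ (t₀ + T), ∫⁻ x in Ico (xc - Φ/2) (xc + Φ/2),
          (gmult (xc - Φ/2) (xc + Φ/2) X (X t x) t)⁻¹) ≤ ENNReal.ofReal (4 * T) ∧
      (∫⁻ t in Ioo t₀ (t₀ + T + 1/lam), ∫⁻ x in Ico (xc - Φ/2) (xc + Φ/2),
          ENNReal.ofReal ((D t x)^2))
        ≤ ENNReal.ofReal (acoef 0 * Φ^3 / T + lam * Φ^3 / (4 * 4^(0:ℕ))) := by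
  have hilam : 0 < 1/lam := by positivity
  refine ⟨fun t x => if t ≤ t₀ + T then xc else xc + lam * (t - (t₀ + T)) * (x - xc),
    fun t x => if t ≤ t₀ + T then 0 else lam * (x - xc), ?_, ?_, ?_, ?_, ?_⟩
  · exact Measurable.ite (measurableSet_le measurable_fst measurable_const)
      measurable_const (by fun_prop)
  · exact Measurable.ite (measurableSet_le measurable_fst measurable_const)
      measurable_const (by fun_prop)
  · intro x hx
    simp only
    have hmD : Measurable fun t : ℝ => if t ≤ t₀ + T then (0:ℝ) else lam * (x - xc) :=
      Measurable.ite (measurableSet_le measurable_id measurable_const)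
        measurable_const measurable_const
    have hint : IntegrableOn (fun t => if t ≤ t₀ + T then (0:ℝ) else lam * (x - xc))
        (Icc t₀ (t₀ + T + 1/lam)) := by
      apply Measure.integrableOn_of_bounded (M := |lam * (x - xc)|)
      · exact (measure_Icc_lt_top).ne
      · exact hmD.aestronglyMeasurable
      · filter_upwards with t
        by_cases h : t ≤ t₀ + T <;> simp [h, abs_nonneg, abs_mul, le_refl] <;> positivity
    refine ⟨hint, ?_, ?_⟩
    · intro t ht
      by_cases htle : t ≤ t₀ + T
      · rw [if_pos htle]
        have hI : ∫ s in t₀..t, (if s ≤ t₀ + T then (0:ℝ) else lam * (x - xc)) = 0 := by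
          rw [intervalIntegral.integral_congr (g := fun _ => (0:ℝ))]
          · simp
          · intro s hs
            rw [uIcc_of_le ht.1] at hs
            have : s ≤ t₀ + T := le_trans hs.2 htle
            simp [this]
        rw [hI, add_zero]
      · push_neg at htle
        rw [if_neg (not_le.2 htle)]
        have hii1 : IntervalIntegrable
            (fun s => if s ≤ t₀ + T then (0:ℝ) else lam * (x - xc)) volume t₀ (t₀ + T) := by
          rw [intervalIntegrable_iff, uIoc_of_le (by linarith)]
          exact hint.mono_set (Ioc_subset_Icc_self.trans (Icc_subset_Icc (le_refl _) (by linarith)))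
        have hii2 : IntervalIntegrable
            (fun s => if s ≤ t₀ + T then (0:ℝ) else lam * (x - xc)) volume (t₀ + T) t := by
          rw [intervalIntegrable_iff, uIoc_of_le htle.le]
          exact hint.mono_set ((Ioc_subset_Icc_self).trans (Icc_subset_Icc (by linarith) ht.2))
        rw [← intervalIntegral.integral_add_adjacent_intervals hii1 hii2]
        have hI1 : ∫ s in t₀..(t₀+T), (if s ≤ t₀ + T then (0:ℝ) else lam * (x - xc)) = 0 := by
          rw [intervalIntegral.integral_congr (g := fun _ => (0:ℝ))]
          · simp
          · intro s hs
            rw [uIcc_of_le (by linarith)] at hs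
            simp [hs.2]
        have hI2 : ∫ s in (t₀+T)..t, (if s ≤ t₀ + T then (0:ℝ) else lam * (x - xc))
            = (t - (t₀ + T)) * (lam * (x - xc)) := by
          rw [intervalIntegral.integral_congr_ae (g := fun _ => lam * (x - xc))]
          · rw [intervalIntegral.integral_const, smul_eq_mul]
          · filter_upwards with s hs
            rw [uIoc_of_le htle.le] at hs
            have : ¬ s ≤ t₀ + T := not_le.2 hs.1
            simp [this]
        rw [hI1, hI2]
        ring
    · have h1 : ¬ (t₀ + T + 1/lam ≤ t₀ + T) := by linarith
      rw [if_neg h1]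
      rw [show t₀ + T + 1/lam - (t₀ + T) = 1/lam by ring]
      field_simp
      ring
  · -- congestion
    have hvol : volume (Ico (xc - Φ/2) (xc + Φ/2)) = ENNReal.ofReal Φ := by
      rw [Real.volume_Ico]; congr 1; ring
    refine le_trans (setLIntegral_le_of_bound _ 1 ?_) ?_
    · intro t ht
      have htle : t ≤ t₀ + T := ht.2.le
      refine le_trans (setLIntegral_le_of_bound _ ((ENNReal.ofReal Φ)⁻¹) ?_) ?_
      · intro x hx
        apply ENNReal.inv_le_inv'
        simp only [if_pos htle]
        rw [← hvol]
        apply measure_mono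
        intro x' hx'
        refine ⟨hx', ?_⟩
        simp [if_pos htle]
      · rw [hvol, ENNReal.inv_mul_cancel (by simp [hΦ]) (by simp)]
    · rw [one_mul, Real.volume_Ioo]
      apply ENNReal.ofReal_le_ofReal
      linarith
  · -- kinetic
    rw [lint_split (b := t₀ + T) (by linarith) (by linarith)]
    have hvol : volume (Ico (xc - Φ/2) (xc + Φ/2)) = ENNReal.ofReal Φ := by
      rw [Real.volume_Ico]; congr 1; ring
    have hp1 : (∫⁻ t in Ioo t₀ (t₀ + T), ∫⁻ x in Ico (xc - Φ/2) (xc + Φ/2),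
        ENNReal.ofReal (((fun t x => if t ≤ t₀ + T then (0:ℝ) else lam * (x - xc)) t x)^2))
        ≤ 0 := by
      refine le_trans (setLIntegral_le_of_bound _ 0 ?_) (by simp)
      intro t ht
      refine le_trans (setLIntegral_le_of_bound _ 0 ?_) (by simp)
      intro x hx
      simp [ht.2.le]
    have hp2 : (∫⁻ t in Ioo (t₀ + T) (t₀ + T + 1/lam), ∫⁻ x in Ico (xc - Φ/2) (xc + Φ/2),
        ENNReal.ofReal (((fun t x => if t ≤ t₀ + T then (0:ℝ) else lam * (x - xc)) t x)^2))
        ≤ ENNReal.ofReal (lam^2 * (Φ/2)^2 * Φ) * ENNReal.ofReal (1/lam) := by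
      refine le_trans (setLIntegral_le_of_bound _ (ENNReal.ofReal (lam^2 * (Φ/2)^2 * Φ)) ?_) ?_
      · intro t ht
        have h1 : ¬ (t ≤ t₀ + T) := not_le.2 ht.1
        refine le_trans (setLIntegral_le_of_bound _ (ENNReal.ofReal (lam^2 * (Φ/2)^2)) ?_) ?_
        · intro x hx
          simp only [if_neg h1]
          apply ENNReal.ofReal_le_ofReal
          have hxa : |x - xc| ≤ Φ/2 := by
            rw [abs_le]
            constructor
            · have := hx.1; linarith
            · have := hx.2; linarith
          have h2 : (x - xc)^2 ≤ (Φ/2)^2 := by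
            rw [← sq_abs (x - xc)]
            apply pow_le_pow_left₀ (abs_nonneg _) hxa
          calc (lam * (x - xc))^2 = lam^2 * (x - xc)^2 := by ring
            _ ≤ lam^2 * (Φ/2)^2 := by nlinarith [sq_nonneg lam]
        · rw [hvol, ← ENNReal.ofReal_mul (by positivity)]
      · rw [Real.volume_Ioo]
        apply mul_le_mul_right
        apply ENNReal.ofReal_le_ofReal
        linarith
    calc _ ≤ (0:ℝ≥0∞) + ENNReal.ofReal (lam^2 * (Φ/2)^2 * Φ) * ENNReal.ofReal (1/lam) :=
          add_le_add hp1 hp2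
      _ = ENNReal.ofReal (lam^2 * (Φ/2)^2 * Φ * (1/lam)) := by
          rw [zero_add, ← ENNReal.ofReal_mul (by positivity)]
      _ ≤ ENNReal.ofReal (acoef 0 * Φ^3 / T + lam * Φ^3 / (4 * 4^(0:ℕ))) := by
          apply ENNReal.ofReal_le_ofReal
          have : lam^2 * (Φ/2)^2 * Φ * (1/lam) = lam * Φ^3 / 4 := by
            field_simp; ring
          rw [this, acoef]
          norm_num


theorem step_case (lam : ℝ) (hlam : 0 < lam) (K : ℕ)
    (IH : ∀ Φ T t₀ xc : ℝ, 0 < Φ → 0 < T →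
      ∃ X D : ℝ → ℝ → ℝ,
        Measurable (Function.uncurry X) ∧ Measurable (Function.uncurry D) ∧
        (∀ x ∈ Ico (xc - Φ/2) (xc + Φ/2),
          IntegrableOn (fun t => D t x) (Icc t₀ (t₀ + T + 1/lam)) ∧
          (∀ t ∈ Icc t₀ (t₀ + T + 1/lam), X t x = xc + ∫ s in t₀..t, D s x) ∧
          X (t₀ + T + 1/lam) x = x) ∧
        (∫⁻ t in Ioo t₀ (t₀ + T), ∫⁻ x in Ico (xc - Φ/2) (xc + Φ/2),
            (gmult (xc - Φ/2) (xc + Φ/2) X (X t x) t)⁻¹) ≤ ENNReal.ofReal (4 * T) ∧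
        (∫⁻ t in Ioo t₀ (t₀ + T + 1/lam), ∫⁻ x in Ico (xc - Φ/2) (xc + Φ/2),
            ENNReal.ofReal ((D t x)^2))
          ≤ ENNReal.ofReal (acoef K * Φ^3 / T + lam * Φ^3 / (4 * 4^K)))
    (Φ T t₀ xc : ℝ) (hΦ : 0 < Φ) (hT : 0 < T) :
    ∃ X D : ℝ → ℝ → ℝ,
      Measurable (Function.uncurry X) ∧ Measurable (Function.uncurry D) ∧
      (∀ x ∈ Ico (xc - Φ/2) (xc + Φ/2),
        IntegrableOn (fun t => D t x) (Icc t₀ (t₀ + T + 1/lam)) ∧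
        (∀ t ∈ Icc t₀ (t₀ + T + 1/lam), X t x = xc + ∫ s in t₀..t, D s x) ∧
        X (t₀ + T + 1/lam) x = x) ∧
      (∫⁻ t in Ioo t₀ (t₀ + T), ∫⁻ x in Ico (xc - Φ/2) (xc + Φ/2),
          (gmult (xc - Φ/2) (xc + Φ/2) X (X t x) t)⁻¹) ≤ ENNReal.ofReal (4 * T) ∧
      (∫⁻ t in Ioo t₀ (t₀ + T + 1/lam), ∫⁻ x in Ico (xc - Φ/2) (xc + Φ/2),
          ENNReal.ofReal ((D t x)^2))
        ≤ ENNReal.ofReal (acoef (K+1) * Φ^3 / T + lam * Φ^3 / (4 * 4^(K+1))) := by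
  have hilam : 0 < 1/lam := by positivity
  set Δ := 2*T/3 with hΔdef
  set T' := T/3 with hT'def
  set t₁ := t₀ + Δ with ht₁def
  have hΔ : 0 < Δ := by rw [hΔdef]; linarith
  have hT' : 0 < T' := by rw [hT'def]; linarith
  have ht₁gt : t₀ < t₁ := by rw [ht₁def]; linarith
  have ht₁lt : t₁ < t₀ + T := by rw [ht₁def, hΔdef]; linarith
  have ht₁ltE : t₁ < t₀ + T + 1/lam := by linarith
  obtain ⟨X₁, D₁, mX₁, mD₁, adm₁, cong₁, kin₁⟩ := IH (Φ/2) T' t₁ (xc - Φ/4) (by linarith) hT'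
  obtain ⟨X₂, D₂, mX₂, mD₂, adm₂, cong₂, kin₂⟩ := IH (Φ/2) T' t₁ (xc + Φ/4) (by linarith) hT'
  have e1 : xc - Φ/4 - Φ/2/2 = xc - Φ/2 := by ring
  have e2 : xc - Φ/4 + Φ/2/2 = xc := by ring
  have e3 : xc + Φ/4 - Φ/2/2 = xc := by ring
  have e4 : xc + Φ/4 + Φ/2/2 = xc + Φ/2 := by ring
  have e5 : t₁ + T' + 1/lam = t₀ + T + 1/lam := by rw [ht₁def, hΔdef, hT'def]; ring
  have e6 : t₁ + T' = t₀ + T := by rw [ht₁def, hΔdef, hT'def]; ring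
  rw [e1, e2, e5] at adm₁
  rw [e1, e2, e6] at cong₁
  rw [e1, e2, e5] at kin₁
  rw [e3, e4, e5] at adm₂
  rw [e3, e4, e6] at cong₂
  rw [e3, e4, e5] at kin₂
  set XX : ℝ → ℝ → ℝ := fun t x =>
    if x < xc then (if t ≤ t₁ then xc + ((t - t₀)/Δ) * (-(Φ/4)) else X₁ t x)
    else (if t ≤ t₁ then xc + ((t - t₀)/Δ) * (Φ/4) else X₂ t x) with hXX
  set DD : ℝ → ℝ → ℝ := fun t x =>
    if x < xc then (if t ≤ t₁ then -(Φ/4)/Δ else D₁ t x)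
    else (if t ≤ t₁ then (Φ/4)/Δ else D₂ t x) with hDD
  have hbig : volume (Ico (xc - Φ/2) (xc + Φ/2)) = ENNReal.ofReal Φ := by
    rw [Real.volume_Ico]; congr 1; ring
  have hleft : volume (Ico (xc - Φ/2) xc) = ENNReal.ofReal (Φ/2) := by
    rw [Real.volume_Ico]; congr 1; ring
  have hright : volume (Ico xc (xc + Φ/2)) = ENNReal.ofReal (Φ/2) := by
    rw [Real.volume_Ico]; congr 1; ring
  have mXX : Measurable (Function.uncurry XX) := by
    rw [hXX]
    apply Measurable.ite (measurableSet_lt measurable_snd measurable_const)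
    · exact Measurable.ite (measurableSet_le measurable_fst measurable_const)
        (by fun_prop) mX₁
    · exact Measurable.ite (measurableSet_le measurable_fst measurable_const)
        (by fun_prop) mX₂
  have mDD : Measurable (Function.uncurry DD) := by
    rw [hDD]
    apply Measurable.ite (measurableSet_lt measurable_snd measurable_const)
    · exact Measurable.ite (measurableSet_le measurable_fst measurable_const)
        measurable_const mD₁
    · exact Measurable.ite (measurableSet_le measurable_fst measurable_const)
        measurable_const mD₂
  refine ⟨XX, DD, mXX, mDD, ?_, ?_, ?_⟩
  · -- admissibility
    intro x hx
    rcases lt_or_ge x xc with hxl | hxr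
    · -- left half
      obtain ⟨int₁, id₁, end₁⟩ := adm₁ x ⟨hx.1, hxl⟩
      have hDf : (fun t => DD t x) = fun t => if t ≤ t₁ then -(Φ/4)/Δ else D₁ t x := by
        funext t; rw [hDD]; simp [hxl]
      have hEint : IntegrableOn (fun t => if t ≤ t₁ then -(Φ/4)/Δ else D₁ t x)
          (Icc t₀ (t₀ + T + 1/lam)) := by
        rw [← Icc_union_Icc_eq_Icc ht₁gt.le ht₁ltE.le]
        apply IntegrableOn.union
        · apply IntegrableOn.congr_fun (f := fun _ => -(Φ/4)/Δ)
          · exact integrableOn_const measure_Icc_lt_top.ne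
          · intro s hs; simp [hs.2]
          · exact measurableSet_Icc
        · apply Integrable.congr int₁
          have hne : ∀ᵐ t : ℝ ∂(volume.restrict (Icc t₁ (t₀ + T + 1/lam))), t ≠ t₁ := by
            apply Filter.Eventually.filter_mono (ae_mono Measure.restrict_le_self)
            rw [ae_iff]
            have h : {t : ℝ | ¬ t ≠ t₁} = {t₁} := by ext; simp
            rw [h]; exact measure_singleton t₁
          filter_upwards [hne, ae_restrict_mem measurableSet_Icc] with t htne htmem
          have h : ¬ t ≤ t₁ := not_le.2 (lt_of_le_of_ne htmem.1 (Ne.symm htne))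
          simp [h]
      refine ⟨by rw [hDf]; exact hEint, ?_, ?_⟩
      · intro t ht
        rw [hXX, hDf]
        simp only [if_pos hxl]
        by_cases htle : t ≤ t₁
        · rw [if_pos htle]
          have hI : ∫ s in t₀..t, (if s ≤ t₁ then -(Φ/4)/Δ else D₁ s x)
              = (t - t₀) * (-(Φ/4)/Δ) := by
            rw [intervalIntegral.integral_congr (g := fun _ => -(Φ/4)/Δ)]
            · rw [intervalIntegral.integral_const, smul_eq_mul]
            · intro s hs
              rw [uIcc_of_le ht.1] at hs
              exact if_pos (le_trans hs.2 htle)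
          rw [hI]; ring
        · push_neg at htle
          rw [if_neg (not_le.2 htle)]
          have hii1 : IntervalIntegrable (fun s => if s ≤ t₁ then -(Φ/4)/Δ else D₁ s x)
              volume t₀ t₁ := by
            rw [intervalIntegrable_iff, uIoc_of_le ht₁gt.le]
            exact hEint.mono_set (Ioc_subset_Icc_self.trans
              (Icc_subset_Icc (le_refl _) ht₁ltE.le))
          have hii2 : IntervalIntegrable (fun s => if s ≤ t₁ then -(Φ/4)/Δ else D₁ s x)
              volume t₁ t := by
            rw [intervalIntegrable_iff, uIoc_of_le htle.le]
            exact hEint.mono_set (Ioc_subset_Icc_self.trans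
              (Icc_subset_Icc ht₁gt.le ht.2))
          rw [← intervalIntegral.integral_add_adjacent_intervals hii1 hii2]
          have hI1 : ∫ s in t₀..t₁, (if s ≤ t₁ then -(Φ/4)/Δ else D₁ s x) = -(Φ/4) := by
            rw [intervalIntegral.integral_congr (g := fun _ => -(Φ/4)/Δ)]
            · rw [intervalIntegral.integral_const, smul_eq_mul,
                show t₁ - t₀ = Δ by rw [ht₁def]; ring]
              field_simp
            · intro s hs
              rw [uIcc_of_le ht₁gt.le] at hs
              exact if_pos hs.2
          have hI2 : ∫ s in t₁..t, (if s ≤ t₁ then -(Φ/4)/Δ else D₁ s x)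
              = X₁ t x - (xc - Φ/4) := by
            rw [intervalIntegral.integral_congr_ae (g := fun s => D₁ s x)]
            · rw [id₁ t ⟨htle.le, ht.2⟩]; ring
            · filter_upwards with s hs
              rw [uIoc_of_le htle.le] at hs
              exact if_neg (not_le.2 hs.1)
          rw [hI1, hI2]; ring
      · rw [hXX]
        simp only [if_pos hxl]
        rw [if_neg (not_le.2 ht₁ltE)]
        exact end₁
    · -- right half
      obtain ⟨int₂, id₂, end₂⟩ := adm₂ x ⟨hxr, hx.2⟩
      have hxr' : ¬ x < xc := not_lt.2 hxr
      have hDf : (fun t => DD t x) = fun t => if t ≤ t₁ then (Φ/4)/Δ else D₂ t x := by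
        funext t; rw [hDD]; simp [hxr']
      have hEint : IntegrableOn (fun t => if t ≤ t₁ then (Φ/4)/Δ else D₂ t x)
          (Icc t₀ (t₀ + T + 1/lam)) := by
        rw [← Icc_union_Icc_eq_Icc ht₁gt.le ht₁ltE.le]
        apply IntegrableOn.union
        · apply IntegrableOn.congr_fun (f := fun _ => (Φ/4)/Δ)
          · exact integrableOn_const measure_Icc_lt_top.ne
          · intro s hs; simp [hs.2]
          · exact measurableSet_Icc
        · apply Integrable.congr int₂
          have hne : ∀ᵐ t : ℝ ∂(volume.restrict (Icc t₁ (t₀ + T + 1/lam))), t ≠ t₁ := by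
            apply Filter.Eventually.filter_mono (ae_mono Measure.restrict_le_self)
            rw [ae_iff]
            have h : {t : ℝ | ¬ t ≠ t₁} = {t₁} := by ext; simp
            rw [h]; exact measure_singleton t₁
          filter_upwards [hne, ae_restrict_mem measurableSet_Icc] with t htne htmem
          have h : ¬ t ≤ t₁ := not_le.2 (lt_of_le_of_ne htmem.1 (Ne.symm htne))
          simp [h]
      refine ⟨by rw [hDf]; exact hEint, ?_, ?_⟩
      · intro t ht
        rw [hXX, hDf]
        simp only [if_neg hxr']
        by_cases htle : t ≤ t₁
        · rw [if_pos htle]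
          have hI : ∫ s in t₀..t, (if s ≤ t₁ then (Φ/4)/Δ else D₂ s x)
              = (t - t₀) * ((Φ/4)/Δ) := by
            rw [intervalIntegral.integral_congr (g := fun _ => (Φ/4)/Δ)]
            · rw [intervalIntegral.integral_const, smul_eq_mul]
            · intro s hs
              rw [uIcc_of_le ht.1] at hs
              exact if_pos (le_trans hs.2 htle)
          rw [hI]; ring
        · push_neg at htle
          rw [if_neg (not_le.2 htle)]
          have hii1 : IntervalIntegrable (fun s => if s ≤ t₁ then (Φ/4)/Δ else D₂ s x)
              volume t₀ t₁ := by
            rw [intervalIntegrable_iff, uIoc_of_le ht₁gt.le]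
            exact hEint.mono_set (Ioc_subset_Icc_self.trans
              (Icc_subset_Icc (le_refl _) ht₁ltE.le))
          have hii2 : IntervalIntegrable (fun s => if s ≤ t₁ then (Φ/4)/Δ else D₂ s x)
              volume t₁ t := by
            rw [intervalIntegrable_iff, uIoc_of_le htle.le]
            exact hEint.mono_set (Ioc_subset_Icc_self.trans
              (Icc_subset_Icc ht₁gt.le ht.2))
          rw [← intervalIntegral.integral_add_adjacent_intervals hii1 hii2]
          have hI1 : ∫ s in t₀..t₁, (if s ≤ t₁ then (Φ/4)/Δ else D₂ s x) = Φ/4 := by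
            rw [intervalIntegral.integral_congr (g := fun _ => (Φ/4)/Δ)]
            · rw [intervalIntegral.integral_const, smul_eq_mul,
                show t₁ - t₀ = Δ by rw [ht₁def]; ring]
              field_simp
            · intro s hs
              rw [uIcc_of_le ht₁gt.le] at hs
              exact if_pos hs.2
          have hI2 : ∫ s in t₁..t, (if s ≤ t₁ then (Φ/4)/Δ else D₂ s x)
              = X₂ t x - (xc + Φ/4) := by
            rw [intervalIntegral.integral_congr_ae (g := fun s => D₂ s x)]
            · rw [id₂ t ⟨htle.le, ht.2⟩]; ring
            · filter_upwards with s hs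
              rw [uIoc_of_le htle.le] at hs
              exact if_neg (not_le.2 hs.1)
          rw [hI1, hI2]; ring
      · rw [hXX]
        simp only [if_neg hxr']
        rw [if_neg (not_le.2 ht₁ltE)]
        exact end₂
  · -- congestion bound
    rw [lint_split (b := t₁) ht₁gt.le ht₁lt]
    have hp1 : (∫⁻ t in Ioo t₀ t₁, ∫⁻ x in Ico (xc - Φ/2) (xc + Φ/2),
        (gmult (xc - Φ/2) (xc + Φ/2) XX (XX t x) t)⁻¹)
        ≤ ENNReal.ofReal 2 * volume (Ioo t₀ t₁) := by
      apply setLIntegral_le_of_bound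
      intro t ht
      have htle : t ≤ t₁ := ht.2.le
      refine le_trans (setLIntegral_le_of_bound _ (ENNReal.ofReal (Φ/2))⁻¹ ?_) ?_
      · intro x hx
        apply ENNReal.inv_le_inv'
        by_cases hxl : x < xc
        · rw [← hleft]
          apply measure_mono
          intro x' hx'
          refine ⟨⟨hx'.1, lt_of_lt_of_le hx'.2 (by linarith)⟩, ?_⟩
          rw [hXX]
          simp only [if_pos hx'.2, if_pos hxl, if_pos htle]
        · rw [← hright]
          apply measure_mono
          intro x' hx'
          refine ⟨⟨le_trans (by linarith) hx'.1, hx'.2⟩, ?_⟩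
          rw [hXX]
          simp only [if_neg (not_lt.2 hx'.1), if_neg hxl, if_pos htle]
      · rw [hbig]
        exact le_of_eq (inv_mul_width (by linarith) (by norm_num) (by ring))
    have hp2 : (∫⁻ t in Ioo t₁ (t₀ + T), ∫⁻ x in Ico (xc - Φ/2) (xc + Φ/2),
        (gmult (xc - Φ/2) (xc + Φ/2) XX (XX t x) t)⁻¹)
        ≤ ENNReal.ofReal (4 * T') + ENNReal.ofReal (4 * T') := by
      calc ∫⁻ t in Ioo t₁ (t₀ + T), ∫⁻ x in Ico (xc - Φ/2) (xc + Φ/2),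
            (gmult (xc - Φ/2) (xc + Φ/2) XX (XX t x) t)⁻¹
          ≤ ∫⁻ t in Ioo t₁ (t₀ + T),
            ((∫⁻ x in Ico (xc - Φ/2) xc, (gmult (xc - Φ/2) xc X₁ (X₁ t x) t)⁻¹) +
             (∫⁻ x in Ico xc (xc + Φ/2), (gmult xc (xc + Φ/2) X₂ (X₂ t x) t)⁻¹)) := by
            apply setLIntegral_mono
              ((cong_inner_meas mX₁).add (cong_inner_meas mX₂))
            intro t ht
            have htgt : ¬ t ≤ t₁ := not_le.2 ht.1
            rw [lint_split_x (b := xc) (by linarith) (by linarith)]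
            apply add_le_add
            · apply setLIntegral_mono (cong_integrand_meas_x t mX₁)
              intro x hx
              apply ENNReal.inv_le_inv'
              have hXeq : XX t x = X₁ t x := by
                rw [hXX]; simp only [if_pos hx.2, if_neg htgt]
              apply measure_mono
              intro x' hx'
              refine ⟨⟨hx'.1.1, lt_of_lt_of_le hx'.1.2 (by linarith)⟩, ?_⟩
              have h : XX t x' = X₁ t x' := by
                rw [hXX]; simp only [if_pos hx'.1.2, if_neg htgt]
              rw [h, hx'.2, ← hXeq]
            · apply setLIntegral_mono (cong_integrand_meas_x t mX₂)
              intro x hx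
              apply ENNReal.inv_le_inv'
              have hXeq : XX t x = X₂ t x := by
                rw [hXX]; simp only [if_neg (not_lt.2 hx.1), if_neg htgt]
              apply measure_mono
              intro x' hx'
              refine ⟨⟨le_trans (by linarith) hx'.1.1, hx'.1.2⟩, ?_⟩
              have h : XX t x' = X₂ t x' := by
                rw [hXX]; simp only [if_neg (not_lt.2 hx'.1.1), if_neg htgt]
              rw [h, hx'.2, ← hXeq]
        _ = (∫⁻ t in Ioo t₁ (t₀ + T), ∫⁻ x in Ico (xc - Φ/2) xc,
              (gmult (xc - Φ/2) xc X₁ (X₁ t x) t)⁻¹) +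
            ∫⁻ t in Ioo t₁ (t₀ + T), ∫⁻ x in Ico xc (xc + Φ/2),
              (gmult xc (xc + Φ/2) X₂ (X₂ t x) t)⁻¹ :=
            lintegral_add_left (cong_inner_meas mX₁) _
        _ ≤ ENNReal.ofReal (4 * T') + ENNReal.ofReal (4 * T') := add_le_add cong₁ cong₂
    calc _ ≤ (ENNReal.ofReal 2 * volume (Ioo t₀ t₁)) +
          (ENNReal.ofReal (4 * T') + ENNReal.ofReal (4 * T')) := add_le_add hp1 hp2
      _ ≤ ENNReal.ofReal (4 * T) := by
          rw [Real.volume_Ioo, show t₁ - t₀ = Δ by rw [ht₁def]; ring,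
            ← ENNReal.ofReal_mul (by norm_num), ← ENNReal.ofReal_add (by positivity) (by positivity),
            ← ENNReal.ofReal_add (by positivity) (by positivity)]
          apply ENNReal.ofReal_le_ofReal
          rw [hΔdef, hT'def]; linarith
  · -- kinetic bound
    rw [lint_split (b := t₁) ht₁gt.le ht₁ltE]
    have hp1 : (∫⁻ t in Ioo t₀ t₁, ∫⁻ x in Ico (xc - Φ/2) (xc + Φ/2),
        ENNReal.ofReal ((DD t x)^2))
        ≤ (ENNReal.ofReal (((Φ/4)/Δ)^2) * ENNReal.ofReal Φ) * volume (Ioo t₀ t₁) := by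
      apply setLIntegral_le_of_bound
      intro t ht
      refine le_trans (setLIntegral_le_of_bound _ (ENNReal.ofReal (((Φ/4)/Δ)^2)) ?_) ?_
      · intro x hx
        have h : (DD t x)^2 = ((Φ/4)/Δ)^2 := by
          rw [hDD]
          by_cases hxl : x < xc <;> simp only [hxl, if_true, if_false, ht.2.le, if_pos] <;> ring
        rw [h]
      · rw [hbig]
    have hp2 : (∫⁻ t in Ioo t₁ (t₀ + T + 1/lam), ∫⁻ x in Ico (xc - Φ/2) (xc + Φ/2),
        ENNReal.ofReal ((DD t x)^2))
        ≤ ENNReal.ofReal (acoef K * (Φ/2)^3 / T' + lam * (Φ/2)^3 / (4 * 4^K)) +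
          ENNReal.ofReal (acoef K * (Φ/2)^3 / T' + lam * (Φ/2)^3 / (4 * 4^K)) := by
      calc ∫⁻ t in Ioo t₁ (t₀ + T + 1/lam), ∫⁻ x in Ico (xc - Φ/2) (xc + Φ/2),
            ENNReal.ofReal ((DD t x)^2)
          ≤ ∫⁻ t in Ioo t₁ (t₀ + T + 1/lam),
            ((∫⁻ x in Ico (xc - Φ/2) xc, ENNReal.ofReal ((D₁ t x)^2)) +
             (∫⁻ x in Ico xc (xc + Φ/2), ENNReal.ofReal ((D₂ t x)^2))) := by
            apply setLIntegral_mono ((kin_inner_meas mD₁).add (kin_inner_meas mD₂))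
            intro t ht
            have htgt : ¬ t ≤ t₁ := not_le.2 ht.1
            rw [lint_split_x (b := xc) (by linarith) (by linarith)]
            apply add_le_add
            · apply setLIntegral_mono ((mD₁.pow_const 2).ennreal_ofReal.comp
                (measurable_const.prodMk measurable_id))
              intro x hx
              apply le_of_eq
              rw [hDD]
              simp only [if_pos hx.2, if_neg htgt]
              rfl
            · apply setLIntegral_mono ((mD₂.pow_const 2).ennreal_ofReal.comp
                (measurable_const.prodMk measurable_id))
              intro x hx
              apply le_of_eq
              rw [hDD]
              simp only [if_neg (not_lt.2 hx.1), if_neg htgt]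
              rfl
        _ = (∫⁻ t in Ioo t₁ (t₀ + T + 1/lam), ∫⁻ x in Ico (xc - Φ/2) xc,
              ENNReal.ofReal ((D₁ t x)^2)) +
            ∫⁻ t in Ioo t₁ (t₀ + T + 1/lam), ∫⁻ x in Ico xc (xc + Φ/2),
              ENNReal.ofReal ((D₂ t x)^2) :=
            lintegral_add_left (kin_inner_meas mD₁) _
        _ ≤ _ := add_le_add kin₁ kin₂
    calc _ ≤ ((ENNReal.ofReal (((Φ/4)/Δ)^2) * ENNReal.ofReal Φ) * volume (Ioo t₀ t₁)) +
          (ENNReal.ofReal (acoef K * (Φ/2)^3 / T' + lam * (Φ/2)^3 / (4 * 4^K)) +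
           ENNReal.ofReal (acoef K * (Φ/2)^3 / T' + lam * (Φ/2)^3 / (4 * 4^K))) :=
          add_le_add hp1 hp2
      _ ≤ ENNReal.ofReal (acoef (K+1) * Φ^3 / T + lam * Φ^3 / (4 * 4^(K+1))) := by
          have hBnn : 0 ≤ acoef K * (Φ/2)^3 / T' + lam * (Φ/2)^3 / (4 * 4^K) := by
            have := acoef_nonneg K
            positivity
          rw [Real.volume_Ioo, show t₁ - t₀ = Δ by rw [ht₁def]; ring,
            ← ENNReal.ofReal_mul (by positivity), ← ENNReal.ofReal_mul (by positivity),
            ← ENNReal.ofReal_add hBnn hBnn,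
            ← ENNReal.ofReal_add (by positivity) (by positivity)]
          apply ENNReal.ofReal_le_ofReal
          apply le_of_eq
          have h4 : (4:ℝ)^(K+1) = 4 * 4^K := by rw [pow_succ]; ring
          rw [hΔdef, hT'def, h4, acoef]
          have h4K : (0:ℝ) < 4^K := by positivity
          field_simp
          ring



theorem genClaim (lam : ℝ) (hlam : 0 < lam) (K : ℕ) :
    ∀ Φ T t₀ xc : ℝ, 0 < Φ → 0 < T →
      ∃ X D : ℝ → ℝ → ℝ,
        Measurable (Function.uncurry X) ∧ Measurable (Function.uncurry D) ∧
        (∀ x ∈ Ico (xc - Φ/2) (xc + Φ/2),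
          IntegrableOn (fun t => D t x) (Icc t₀ (t₀ + T + 1/lam)) ∧
          (∀ t ∈ Icc t₀ (t₀ + T + 1/lam), X t x = xc + ∫ s in t₀..t, D s x) ∧
          X (t₀ + T + 1/lam) x = x) ∧
        (∫⁻ t in Ioo t₀ (t₀ + T), ∫⁻ x in Ico (xc - Φ/2) (xc + Φ/2),
            (gmult (xc - Φ/2) (xc + Φ/2) X (X t x) t)⁻¹) ≤ ENNReal.ofReal (4 * T) ∧
        (∫⁻ t in Ioo t₀ (t₀ + T + 1/lam), ∫⁻ x in Ico (xc - Φ/2) (xc + Φ/2),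
            ENNReal.ofReal ((D t x)^2))
          ≤ ENNReal.ofReal (acoef K * Φ^3 / T + lam * Φ^3 / (4 * 4^K)) := by
  induction K with
  | zero => exact fun Φ T t₀ xc hΦ hT => base_case lam hlam Φ T t₀ xc hΦ hT
  | succ K IH => exact fun Φ T t₀ xc hΦ hT => step_case lam hlam K IH Φ T t₀ xc hΦ hT

theorem lagE_upper {Φ T lam : ℝ} (hΦ : 0 < Φ) (hT : 0 < T) (hlam : 0 < lam) :
    lagE Φ T lam 0 ≤ ENNReal.ofReal (4 * (T + lam * Φ^3 / (1 + lam * T))) := by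
  have hTl : 0 < Tlam T lam := Tlam_pos hT hlam
  -- choose the number of splittings
  obtain ⟨K, hKbound⟩ : ∃ K : ℕ,
      acoef K * Φ^3/T + lam * Φ^3/(4 * 4^K) ≤ 3 * (Φ^3 / Tlam T lam) := by
    rcases le_or_gt 1 (lam*T) with hc | hc
    · obtain ⟨K, hK⟩ := pow_unbounded_of_one_lt (lam*T) (by norm_num : (1:ℝ) < 4)
      refine ⟨K, ?_⟩
      have h4K : (0:ℝ) < 4^K := by positivity
      have hinv : 1/lam ≤ T := by
        rw [div_le_iff₀ hlam]
        nlinarith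
      have h1 : Tlam T lam ≤ 2*T := by rw [Tlam]; linarith
      have h2 : acoef K * Φ^3/T ≤ (3/8) * Φ^3/T := by
        gcongr
        exact acoef_le K
      have h3 : lam*Φ^3/(4*4^K) ≤ Φ^3/(4*T) := by
        rw [div_le_div_iff₀ (by positivity) (by positivity)]
        calc lam*Φ^3*(4*T) = (lam*T)*(4*Φ^3) := by ring
          _ ≤ 4^K*(4*Φ^3) := mul_le_mul_of_nonneg_right hK.le (by positivity)
          _ = Φ^3*(4*4^K) := by ring
      have h4 : Φ^3/T ≤ 2*(Φ^3/Tlam T lam) := by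
        rw [div_le_iff₀ hT]
        rw [mul_comm (2:ℝ) _, div_mul_eq_mul_div, div_mul_eq_mul_div, le_div_iff₀ hTl]
        nlinarith [pow_pos hΦ 3]
      calc acoef K * Φ^3/T + lam * Φ^3/(4 * 4^K)
          ≤ (3/8) * Φ^3/T + Φ^3/(4*T) := add_le_add h2 h3
        _ = (5/8) * (Φ^3/T) := by field_simp; ring
        _ ≤ (5/8) * (2*(Φ^3/Tlam T lam)) := by
            apply mul_le_mul_of_nonneg_left h4 (by norm_num)
        _ ≤ 3 * (Φ^3 / Tlam T lam) := by
            have : 0 ≤ Φ^3 / Tlam T lam := by positivity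
            nlinarith
    · refine ⟨0, ?_⟩
      have hTlam2 : lam * Tlam T lam ≤ 2 := by
        rw [Tlam]
        have h1 : lam * (1/lam) = 1 := by field_simp
        nlinarith
      rw [show acoef 0 = 0 from rfl, pow_zero, zero_mul, zero_div, zero_add]
      have hl2 : lam ≤ 2 / Tlam T lam := by
        rw [le_div_iff₀ hTl]; linarith
      calc lam * Φ^3/(4*1) ≤ (2 / Tlam T lam) * Φ^3/(4*1) := by gcongr
        _ = (1/2) * (Φ^3 / Tlam T lam) := by field_simp; ring
        _ ≤ 3 * (Φ^3 / Tlam T lam) := by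
            have : 0 ≤ Φ^3 / Tlam T lam := by positivity
            linarith
  obtain ⟨X, D, mX, mD, adm, cong, kin⟩ := genClaim lam hlam K Φ T 0 0 hΦ hT
  have f1 : (0:ℝ) - Φ/2 = -(Φ/2) := by ring
  have f2 : (0:ℝ) + Φ/2 = Φ/2 := by ring
  have f3 : (0:ℝ) + T + 1/lam = Tlam T lam := by rw [Tlam]; ring
  have f4 : (0:ℝ) + T = T := by ring
  rw [f1, f2, f3] at adm
  rw [f1, f2, f4] at cong
  rw [f1, f2, f3] at kin
  have hIcoIcc : (Icc (-(Φ/2)) (Φ/2) : Set ℝ) =ᵐ[volume] Ico (-(Φ/2)) (Φ/2) :=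
    (MeasureTheory.Ico_ae_eq_Icc).symm
  have hadm : LagAdm Φ (Tlam T lam) 0 X D := by
    refine ⟨mX, mD, ?_⟩
    rw [Measure.restrict_congr_set hIcoIcc]
    rw [ae_restrict_iff' measurableSet_Ico]
    apply Filter.Eventually.of_forall
    intro x hx
    obtain ⟨hint, hid, hend⟩ := adm x hx
    refine ⟨?_, hend, hint, hid⟩
    have h0 := hid 0 ⟨le_refl 0, hTl.le⟩
    simpa using h0
  have hle : lagE Φ T lam 0 ≤ lagEnergy Φ T lam X D := by
    rw [lagE]
    exact iInf_le_of_le X (iInf_le_of_le D (iInf_le_of_le hadm (le_refl _)))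
  have hE : lagEnergy Φ T lam X D ≤
      ENNReal.ofReal (4*T) + ENNReal.ofReal (acoef K * Φ^3/T + lam * Φ^3/(4*4^K)) := by
    rw [lagEnergy]
    apply add_le_add
    · calc ∫⁻ t in Ioo (0:ℝ) T, ∫⁻ x in Icc (-(Φ/2)) (Φ/2), (mult Φ X (X t x) t)⁻¹
          ≤ ∫⁻ t in Ioo (0:ℝ) T, ∫⁻ x in Ico (-(Φ/2)) (Φ/2),
            (gmult (-(Φ/2)) (Φ/2) X (X t x) t)⁻¹ := by
            apply lintegral_mono
            intro t
            rw [Measure.restrict_congr_set hIcoIcc]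
            apply setLIntegral_mono (cong_integrand_meas_x t mX)
            intro x _
            apply ENNReal.inv_le_inv'
            apply measure_mono
            intro x' hx'
            exact ⟨Ico_subset_Icc_self hx'.1, hx'.2⟩
        _ ≤ ENNReal.ofReal (4*T) := cong
    · calc ∫⁻ t in Ioo (0:ℝ) (Tlam T lam), ∫⁻ x in Icc (-(Φ/2)) (Φ/2),
            ENNReal.ofReal ((D t x)^2)
          = ∫⁻ t in Ioo (0:ℝ) (Tlam T lam), ∫⁻ x in Ico (-(Φ/2)) (Φ/2),
            ENNReal.ofReal ((D t x)^2) := by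
            apply lintegral_congr
            intro t
            rw [Measure.restrict_congr_set hIcoIcc]
        _ ≤ ENNReal.ofReal (acoef K * Φ^3/T + lam * Φ^3/(4*4^K)) := kin
  refine le_trans hle (le_trans hE ?_)
  have hnn : 0 ≤ acoef K * Φ^3/T + lam * Φ^3/(4*4^K) := by
    have := acoef_nonneg K
    positivity
  rw [← ENNReal.ofReal_add (by positivity) hnn]
  apply ENNReal.ofReal_le_ofReal
  rw [ident hT hlam]
  have : 0 ≤ Φ^3 / Tlam T lam := by positivity
  linarith

end S16

/-- `E(Φ,T,λ) ∼ T + λΦ³/(1+λT)` with universal constants. -/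
theorem statement16 :
    ∃ c C : ℝ, 0 < c ∧ 0 < C ∧ ∀ Φ T lam : ℝ, 0 < Φ → 0 < T → 0 < lam →
      ENNReal.ofReal (c * (T + lam * Φ^3 / (1 + lam * T))) ≤ lagE Φ T lam 0 ∧
      lagE Φ T lam 0 ≤ ENNReal.ofReal (C * (T + lam * Φ^3 / (1 + lam * T))) := by
  refine ⟨1/64, 4, by norm_num, by norm_num, fun Φ T lam hΦ hT hlam =>
    ⟨S16.lagE_lower hΦ hT hlam, S16.lagE_upper hΦ hT hlam⟩⟩
end
end

section
/- Let Φ, T, λ > 0 and let X ∈ 𝒞(Φ,T_λ,0) be a minimizer of E(Φ,T,λ). Then for every s ∈ [0,T_λ] and almost every x ∈ [-Φ/2,Φ/2], one has |X(s,x)| ≤ (s/T_λ)·(Φ/2); that is, all trajectories remain in the space-time cone spanned by the vertex (0,0) and the segment {T_λ}×[-Φ/2,Φ/2] (cone property). In particular sup_x |X(T,x)| ≤ (T/(2T_λ)) ≤ λT/(1+λT). -/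
open MeasureTheory Filter Set ENNReal

noncomputable section

section AuxClamp
open intervalIntegral
open scoped Interval


lemma abs_intervalIntegral_le (f : ℝ → ℝ) (hf : Integrable f) (t : ℝ) :
    |∫ s in (0:ℝ)..t, f s| ≤ ∫ s, |f s| := by
  calc |∫ s in (0:ℝ)..t, f s| = ‖∫ s in (0:ℝ)..t, f s‖ := (Real.norm_eq_abs _).symm
    _ ≤ ∫ s in Ι (0:ℝ) t, ‖f s‖ := norm_integral_le_integral_norm_uIoc
    _ ≤ ∫ s, |f s| := by
        simpa [Real.norm_eq_abs] using
          setIntegral_le_integral (μ := volume) (s := Ι (0:ℝ) t) hf.abs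
            (Eventually.of_forall fun s => abs_nonneg _)

lemma sub_cont (g : ℝ → ℝ) (hgc : Continuous g) (hgi : Integrable g)
    (φ : ℝ → ℝ) (hφc : Continuous φ) (t : ℝ) :
    ∫ s in (0:ℝ)..t, φ (∫ u in (0:ℝ)..s, g u) * g s
      = ∫ v in (0:ℝ)..(∫ u in (0:ℝ)..t, g u), φ v := by
  set H : ℝ → ℝ := fun s => ∫ u in (0:ℝ)..s, g u with hH
  set F : ℝ → ℝ := fun y => ∫ v in (0:ℝ)..y, φ v with hF
  have hHd : ∀ s : ℝ, HasDerivAt H (g s) s := fun s =>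
    integral_hasDerivAt_right (hgc.intervalIntegrable _ _)
      hgc.aestronglyMeasurable.stronglyMeasurableAtFilter (hgc.continuousAt)
  have hFd : ∀ y : ℝ, HasDerivAt F (φ y) y := fun y =>
    integral_hasDerivAt_right (hφc.intervalIntegrable _ _)
      hφc.aestronglyMeasurable.stronglyMeasurableAtFilter (hφc.continuousAt)
  have hGd : ∀ s ∈ uIcc (0:ℝ) t, HasDerivAt (fun s => F (H s)) (φ (H s) * g s) s := by
    intro s _
    exact (hFd (H s)).comp s (hHd s)
  have hcont : Continuous fun s => φ (H s) * g s := by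
    have : Continuous H := hgi.continuous_primitive 0
    exact (hφc.comp this).mul hgc
  have := integral_eq_sub_of_hasDerivAt hGd (hcont.intervalIntegrable 0 t)
  simp only [hH] at this
  rw [this]
  simp [hF, hH]

lemma sub_gen (g : ℝ → ℝ) (hgi : Integrable g)
    (φ : ℝ → ℝ) (K : NNReal) (hφL : LipschitzWith K φ) (hφb : ∀ y, |φ y| ≤ 1)
    (t : ℝ) :
    ∫ s in (0:ℝ)..t, φ (∫ u in (0:ℝ)..s, g u) * g s
      = ∫ v in (0:ℝ)..(∫ u in (0:ℝ)..t, g u), φ v := by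
  have hφc : Continuous φ := hφL.continuous
  set C : ℝ := ∫ s, |g s| with hC
  have hC0 : 0 ≤ C := integral_nonneg fun s => abs_nonneg _
  have hden : (0:ℝ) < 2 + (K:ℝ) * C + (K:ℝ) := by positivity
  -- key: for every ε > 0, |LHS - RHS| ≤ ε
  have key : ∀ ε : ℝ, 0 < ε →
      |(∫ s in (0:ℝ)..t, φ (∫ u in (0:ℝ)..s, g u) * g s)
        - ∫ v in (0:ℝ)..(∫ u in (0:ℝ)..t, g u), φ v| ≤ ε := by
    intro ε hε
    set ε' : ℝ := ε / (2 + (K:ℝ) * C + (K:ℝ)) with hε'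
    have hε'0 : 0 < ε' := by positivity
    obtain ⟨g', _hcs, hnear, hg'c, hg'i⟩ :=
      hgi.exists_hasCompactSupport_integral_sub_le hε'0
    have hnear' : ∫ s, |g s - g' s| ≤ ε' := by
      simpa [Real.norm_eq_abs] using hnear
    set H : ℝ → ℝ := fun s => ∫ u in (0:ℝ)..s, g u with hH
    set H' : ℝ → ℝ := fun s => ∫ u in (0:ℝ)..s, g' u with hH'
    have hdiffint : Integrable (fun s => g s - g' s) := hgi.sub hg'i
    have hHH' : ∀ s, |H s - H' s| ≤ ε' := by
      intro s
      have : H s - H' s = ∫ u in (0:ℝ)..s, (g u - g' u) :=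
        (integral_sub hgi.intervalIntegrable hg'i.intervalIntegrable).symm
      rw [this]
      exact le_trans (abs_intervalIntegral_le _ hdiffint s) hnear'
    have hHc : Continuous H := hgi.continuous_primitive 0
    have hH'c : Continuous H' := hg'i.continuous_primitive 0
    -- integrability of the two products
    have hP : Integrable (fun s => φ (H s) * g s) :=
      hgi.bdd_mul (hφc.comp hHc).aestronglyMeasurable
        (c := 1) (Eventually.of_forall fun s => by simpa [Real.norm_eq_abs] using hφb (H s))
    have hP' : Integrable (fun s => φ (H' s) * g' s) :=
      hg'i.bdd_mul (hφc.comp hH'c).aestronglyMeasurable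
        (c := 1) (Eventually.of_forall fun s => by simpa [Real.norm_eq_abs] using hφb (H' s))
    -- LHS difference bound
    have hLHS : |(∫ s in (0:ℝ)..t, φ (H s) * g s)
        - ∫ s in (0:ℝ)..t, φ (H' s) * g' s| ≤ ε' + (K:ℝ) * ε' * C := by
      have heq : (∫ s in (0:ℝ)..t, φ (H s) * g s)
          - ∫ s in (0:ℝ)..t, φ (H' s) * g' s
          = ∫ s in (0:ℝ)..t, (φ (H s) * g s - φ (H' s) * g' s) :=
        (integral_sub hP.intervalIntegrable hP'.intervalIntegrable).symm
      rw [heq]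
      refine le_trans (abs_intervalIntegral_le _ (hP.sub hP') t) ?_
      have hptw : ∀ s, |φ (H s) * g s - φ (H' s) * g' s|
          ≤ |g s - g' s| + ((K:ℝ) * ε') * |g s| := by
        intro s
        have h1 : φ (H s) * g s - φ (H' s) * g' s
            = φ (H' s) * (g s - g' s) + (φ (H s) - φ (H' s)) * g s := by ring
        rw [h1]
        refine le_trans (abs_add_le _ _) (add_le_add ?_ ?_)
        · rw [abs_mul]
          calc |φ (H' s)| * |g s - g' s| ≤ 1 * |g s - g' s| :=
                mul_le_mul_of_nonneg_right (hφb (H' s)) (abs_nonneg _)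
            _ = |g s - g' s| := one_mul _
        · rw [abs_mul]
          have hlip : |φ (H s) - φ (H' s)| ≤ (K:ℝ) * |H s - H' s| := by
            simpa [Real.dist_eq] using hφL.dist_le_mul (H s) (H' s)
          have h2 : |φ (H s) - φ (H' s)| ≤ (K:ℝ) * ε' := by
            refine le_trans hlip ?_
            exact mul_le_mul_of_nonneg_left (hHH' s) (NNReal.coe_nonneg K)
          exact mul_le_mul_of_nonneg_right h2 (abs_nonneg _)
      calc ∫ s, |φ (H s) * g s - φ (H' s) * g' s|
          ≤ ∫ s, (|g s - g' s| + ((K:ℝ) * ε') * |g s|) := by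
            refine integral_mono (hP.sub hP').abs ?_ hptw
            exact hdiffint.abs.add (hgi.abs.const_mul _)
        _ = (∫ s, |g s - g' s|) + (K:ℝ) * ε' * ∫ s, |g s| := by
            rw [integral_add hdiffint.abs (hgi.abs.const_mul _), MeasureTheory.integral_const_mul]
        _ ≤ ε' + (K:ℝ) * ε' * C := by
            rw [← hC]; gcongr
    -- RHS difference bound
    have hRHS : |(∫ v in (0:ℝ)..(H' t), φ v) - ∫ v in (0:ℝ)..(H t), φ v| ≤ ε' := by
      have hsplit : (∫ v in (0:ℝ)..(H t), φ v) + (∫ v in (H t)..(H' t), φ v)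
          = ∫ v in (0:ℝ)..(H' t), φ v :=
        integral_add_adjacent_intervals (hφc.intervalIntegrable _ _) (hφc.intervalIntegrable _ _)
      have : (∫ v in (0:ℝ)..(H' t), φ v) - ∫ v in (0:ℝ)..(H t), φ v
          = ∫ v in (H t)..(H' t), φ v := by linarith
      rw [this]
      have hb : ∀ v ∈ Ι (H t) (H' t), ‖φ v‖ ≤ 1 := fun v _ => by
        simpa [Real.norm_eq_abs] using hφb v
      calc |∫ v in (H t)..(H' t), φ v| ≤ 1 * |H' t - H t| := by
            simpa [Real.norm_eq_abs] using norm_integral_le_of_norm_le_const hb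
        _ ≤ ε' := by rw [one_mul, abs_sub_comm]; exact hHH' t
    have hmid := sub_cont g' hg'c hg'i φ hφc t
    calc |(∫ s in (0:ℝ)..t, φ (H s) * g s) - ∫ v in (0:ℝ)..(H t), φ v|
        = |((∫ s in (0:ℝ)..t, φ (H s) * g s) - ∫ s in (0:ℝ)..t, φ (H' s) * g' s)
            + ((∫ v in (0:ℝ)..(H' t), φ v) - ∫ v in (0:ℝ)..(H t), φ v)| := by
          rw [← hmid]; simp only [hH']; ring_nf
      _ ≤ (ε' + (K:ℝ) * ε' * C) + ε' := le_trans (abs_add_le _ _) (by gcongr)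
      _ ≤ ε' * (2 + (K:ℝ) * C + (K:ℝ)) := by nlinarith [hε'0.le, hC0, NNReal.coe_nonneg K]
      _ = ε := by rw [hε']; field_simp
  have h0 : |(∫ s in (0:ℝ)..t, φ (∫ u in (0:ℝ)..s, g u) * g s)
      - ∫ v in (0:ℝ)..(∫ u in (0:ℝ)..t, g u), φ v| ≤ 0 := by
    by_contra h
    push_neg at h
    have := key _ (half_pos h)
    linarith [half_lt_self h]
  have := abs_nonpos_iff.mp h0
  linarith [sub_eq_zero.mp this]

/-- the cut-off functions -/
def phiN (n : ℕ) : ℝ → ℝ := fun y => min (max ((n:ℝ) * y) 0) 1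

lemma phiN_lip (n : ℕ) : LipschitzWith (n : NNReal) (phiN n) := by
  refine LipschitzWith.of_dist_le_mul fun x y => ?_
  simp only [phiN, Real.dist_eq]
  calc |min (max ((n:ℝ) * x) 0) 1 - min (max ((n:ℝ) * y) 0) 1|
      ≤ max |max ((n:ℝ) * x) 0 - max ((n:ℝ) * y) 0| |(1:ℝ) - 1| :=
        abs_min_sub_min_le_max _ _ _ _
    _ ≤ |(n:ℝ) * x - (n:ℝ) * y| := by
        refine max_le ?_ (by simp [abs_nonneg])
        exact abs_max_sub_max_le_abs _ _ _
    _ = (n:ℝ) * |x - y| := by rw [← mul_sub, abs_mul, abs_of_nonneg (by positivity : (0:ℝ) ≤ (n:ℝ))]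
  
lemma phiN_bd (n : ℕ) (y : ℝ) : |phiN n y| ≤ 1 := by
  rw [abs_le]
  constructor
  · have : (0:ℝ) ≤ min (max ((n:ℝ) * y) 0) 1 := le_min (le_max_right _ _) zero_le_one
    simp only [phiN]; linarith
  · exact min_le_right _ _

lemma phiN_nonneg (n : ℕ) (y : ℝ) : 0 ≤ phiN n y := le_min (le_max_right _ _) zero_le_one

lemma phiN_le_one (n : ℕ) (y : ℝ) : phiN n y ≤ 1 := min_le_right _ _

lemma phiN_of_nonpos (n : ℕ) (y : ℝ) (hy : y ≤ 0) : phiN n y = 0 := by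
  have h1 : (n:ℝ) * y ≤ 0 := mul_nonpos_of_nonneg_of_nonpos (by positivity) hy
  simp [phiN, max_eq_right h1, min_eq_left zero_le_one]

lemma phiN_of_large (n : ℕ) (y : ℝ) (hy : 1 ≤ (n:ℝ) * y) : phiN n y = 1 := by
  have : max ((n:ℝ) * y) 0 = (n:ℝ) * y := max_eq_left (le_trans zero_le_one hy)
  simp [phiN, this, min_eq_right hy]

/-- `∫₀^y φₙ` is within `1/n` of `y⁺`. -/
lemma phiN_primitive_close (n : ℕ) (hn : 1 ≤ n) (y : ℝ) :
    |(∫ v in (0:ℝ)..y, phiN n v) - max y 0| ≤ 1/(n:ℝ) := by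
  have hn0 : (0:ℝ) < n := by exact_mod_cast hn
  rcases le_or_gt y 0 with hy | hy
  · have h0 : (∫ v in (0:ℝ)..y, phiN n v) = ∫ v in (0:ℝ)..y, (0:ℝ) := by
      refine integral_congr fun v hv => ?_
      rcases le_total (0:ℝ) y with h | h
      · have : y = 0 := le_antisymm hy h
        subst this
        simp only [uIcc_self, mem_singleton_iff] at hv
        subst hv; exact phiN_of_nonpos n 0 le_rfl
      · rw [uIcc_of_ge h] at hv
        exact phiN_of_nonpos n v hv.2
    rw [h0, max_eq_right hy]
    simp [le_of_lt (by positivity : (0:ℝ) < 1/(n:ℝ))]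
  · -- y > 0
    have hmax : max y 0 = y := max_eq_left hy.le
    have hint : IntervalIntegrable (phiN n) volume 0 y :=
      ((phiN_lip n).continuous).intervalIntegrable _ _
    have h1 : y - (∫ v in (0:ℝ)..y, phiN n v) = ∫ v in (0:ℝ)..y, (1 - phiN n v) := by
      rw [integral_sub (intervalIntegrable_const (c := (1:ℝ))) hint]
      simp
    have h2 : (0:ℝ) ≤ ∫ v in (0:ℝ)..y, (1 - phiN n v) := by
      refine integral_nonneg hy.le fun v _ => ?_
      linarith [phiN_le_one n v]
    have h3 : (∫ v in (0:ℝ)..y, (1 - phiN n v)) ≤ 1/(n:ℝ) := by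
      have hptw : ∀ v ∈ Icc 0 y, 1 - phiN n v ≤ (Icc (0:ℝ) (1/(n:ℝ))).indicator (fun _ => 1) v := by
        intro v hv
        rcases le_or_gt (1/(n:ℝ)) v with h | h
        · have : phiN n v = 1 := phiN_of_large n v (by
            rw [div_le_iff₀ hn0] at h
            linarith [h])
          simp only [this, sub_self]
          exact indicator_nonneg (fun _ _ => zero_le_one) v
        · have hvmem : v ∈ Icc (0:ℝ) (1/(n:ℝ)) := ⟨hv.1, h.le⟩
          rw [indicator_of_mem hvmem]
          linarith [phiN_nonneg n v]
      have hind : IntervalIntegrable ((Icc (0:ℝ) (1/(n:ℝ))).indicator (fun _ => (1:ℝ))) volume 0 y := by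
        have : Integrable ((Icc (0:ℝ) (1/(n:ℝ))).indicator (fun _ => (1:ℝ))) volume := by
          rw [integrable_indicator_iff measurableSet_Icc]
          exact (integrableOn_const_iff).mpr (Or.inr (by simp))
        exact this.intervalIntegrable
      calc (∫ v in (0:ℝ)..y, (1 - phiN n v))
          ≤ ∫ v in (0:ℝ)..y, (Icc (0:ℝ) (1/(n:ℝ))).indicator (fun _ => (1:ℝ)) v := by
            refine integral_mono_on hy.le ?_ hind hptw
            exact (intervalIntegrable_const (c := (1:ℝ))).sub hint
        _ = ∫ v in Ioc (0:ℝ) y, (Icc (0:ℝ) (1/(n:ℝ))).indicator (fun _ => (1:ℝ)) v :=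
            integral_of_le hy.le
        _ = ∫ v in Ioc (0:ℝ) y ∩ Icc (0:ℝ) (1/(n:ℝ)), (1:ℝ) :=
            setIntegral_indicator measurableSet_Icc
        _ = (volume (Ioc (0:ℝ) y ∩ Icc (0:ℝ) (1/(n:ℝ)))).toReal • (1:ℝ) := setIntegral_const 1
        _ ≤ 1/(n:ℝ) := by
            rw [smul_eq_mul, mul_one]
            have hle : volume (Ioc (0:ℝ) y ∩ Icc (0:ℝ) (1/(n:ℝ))) ≤ volume (Icc (0:ℝ) (1/(n:ℝ))) :=
              measure_mono inter_subset_right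
            have : volume (Icc (0:ℝ) (1/(n:ℝ))) = ENNReal.ofReal (1/(n:ℝ)) := by
              rw [Real.volume_Icc]; norm_num
            rw [this] at hle
            refine le_trans (ENNReal.toReal_mono (by simp) hle) ?_
            rw [ENNReal.toReal_ofReal (by positivity)]
    rw [hmax, abs_sub_comm, abs_le]
    constructor
    · linarith [h3, h1.symm]
    · linarith [h2, h1.symm]

/-- **Key identity**: `∫₀ᵗ g·1_{H>0} = (H t)⁺` where `H` is the primitive of `g`. -/
lemma key_identity (g : ℝ → ℝ) (hgi : Integrable g) (t : ℝ) (ht : 0 ≤ t) :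
    ∫ s in (0:ℝ)..t, ({u : ℝ | 0 < ∫ v in (0:ℝ)..u, g v}.indicator g) s
      = max (∫ u in (0:ℝ)..t, g u) 0 := by
  set H : ℝ → ℝ := fun s => ∫ v in (0:ℝ)..s, g v with hH
  have hHc : Continuous H := hgi.continuous_primitive 0
  -- the approximating identities
  have hids : ∀ n : ℕ, ∫ s in (0:ℝ)..t, phiN n (H s) * g s = ∫ v in (0:ℝ)..(H t), phiN n v :=
    fun n => sub_gen g hgi (phiN n) n (phiN_lip n) (phiN_bd n) t
  -- RHS limit
  have hRHSlim : Tendsto (fun n : ℕ => ∫ v in (0:ℝ)..(H t), phiN n v) atTop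
      (nhds (max (H t) 0)) := by
    rw [← tendsto_sub_nhds_zero_iff]
    refine squeeze_zero_norm' ?_ tendsto_one_div_atTop_nhds_zero_nat
    filter_upwards [eventually_ge_atTop 1] with n hn
    simpa [Real.norm_eq_abs] using phiN_primitive_close n hn (H t)
  -- LHS limit via dominated convergence
  have hLHSlim : Tendsto (fun n : ℕ => ∫ s in (0:ℝ)..t, phiN n (H s) * g s) atTop
      (nhds (∫ s in (0:ℝ)..t, ({u : ℝ | 0 < H u}.indicator g) s)) := by
    have h1 : ∀ n : ℕ, ∫ s in (0:ℝ)..t, phiN n (H s) * g s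
        = ∫ s in Ioc (0:ℝ) t, phiN n (H s) * g s := fun n => integral_of_le ht
    have h2 : ∫ s in (0:ℝ)..t, ({u : ℝ | 0 < H u}.indicator g) s
        = ∫ s in Ioc (0:ℝ) t, ({u : ℝ | 0 < H u}.indicator g) s := integral_of_le ht
    rw [h2]
    simp only [h1]
    refine tendsto_integral_of_dominated_convergence (fun s => |g s|)
      (fun n => ?_) (hgi.abs.restrict) (fun n => ?_) ?_
    · exact (((phiN_lip n).continuous.comp hHc).aestronglyMeasurable.mul
        hgi.aestronglyMeasurable).restrict
    · filter_upwards with s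
      rw [Real.norm_eq_abs, abs_mul]
      calc |phiN n (H s)| * |g s| ≤ 1 * |g s| :=
            mul_le_mul_of_nonneg_right (phiN_bd n (H s)) (abs_nonneg _)
        _ = |g s| := one_mul _
    · filter_upwards with s
      rcases lt_or_ge 0 (H s) with h | h
      · have hev : ∀ᶠ n : ℕ in atTop, phiN n (H s) * g s = g s := by
          filter_upwards [eventually_ge_atTop ⌈(H s)⁻¹⌉₊] with n hn
          have h1 : (H s)⁻¹ ≤ (n:ℝ) := le_trans (Nat.le_ceil _) (by exact_mod_cast hn)
          have : 1 ≤ (n:ℝ) * H s := by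
            rw [← inv_mul_cancel₀ (ne_of_gt h)]
            exact mul_le_mul_of_nonneg_right h1 h.le
          rw [phiN_of_large n (H s) this, one_mul]
        have hind : ({u : ℝ | 0 < H u}.indicator g) s = g s := indicator_of_mem (show s ∈ {u : ℝ | 0 < H u} from h) g
        rw [hind]
        exact Tendsto.congr' (hev.mono fun n hn => hn.symm) tendsto_const_nhds
      · have hval : ∀ n : ℕ, phiN n (H s) * g s = 0 := fun n => by
          rw [phiN_of_nonpos n (H s) h, zero_mul]
        have hind : ({u : ℝ | 0 < H u}.indicator g) s = 0 :=
          indicator_of_notMem (by simp [h.not_gt]) g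
        rw [hind]
        exact Tendsto.congr (fun n => (hval n).symm) tendsto_const_nhds
  have := tendsto_nhds_unique (hLHSlim.congr hids) hRHSlim
  rw [← this]

lemma integrableOn_of_lintegral_ne_top {f : ℝ → ℝ} {s : Set ℝ} (hm : Measurable f)
    (h0 : ∀ x, 0 ≤ f x) (hfin : (∫⁻ x in s, ENNReal.ofReal (f x)) ≠ ⊤) :
    IntegrableOn f s := by
  refine ⟨hm.aestronglyMeasurable.restrict, ?_⟩
  rw [hasFiniteIntegral_iff_ofReal (Eventually.of_forall h0)]
  exact hfin.lt_top

/-- One upper-clamping step. -/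
lemma clamp_step (Tl c : ℝ) (hTl : 0 < Tl) (hc : 0 < c) (ε : ℝ) (hε : ε = 1 ∨ ε = -1)
    (old : ℝ → ℝ) (hom : Measurable old) (hoi : IntegrableOn old (Icc 0 Tl))
    (hend : ε * (∫ s in (0:ℝ)..Tl, old s) ≤ c * Tl) :
    ∃ new : ℝ → ℝ, Measurable new ∧ IntegrableOn new (Icc 0 Tl) ∧
      (∀ s ∈ Icc 0 Tl,
        new s = if 0 < ε * (∫ u in (0:ℝ)..s, old u) - c * s then ε * c else old s) ∧
      (∀ t ∈ Icc 0 Tl, (∫ s in (0:ℝ)..t, new s)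
          = (∫ s in (0:ℝ)..t, old s) - ε * max (ε * (∫ s in (0:ℝ)..t, old s) - c * t) 0) ∧
      ((∫⁻ s in Ioo 0 Tl, ENNReal.ofReal ((new s)^2))
          ≤ ∫⁻ s in Ioo 0 Tl, ENNReal.ofReal ((old s)^2)) ∧
      ((∃ t ∈ Icc 0 Tl, 0 < ε * (∫ u in (0:ℝ)..t, old u) - c * t) →
        (∫⁻ s in Ioo 0 Tl, ENNReal.ofReal ((old s)^2)) ≠ ⊤ →
        (∫⁻ s in Ioo 0 Tl, ENNReal.ofReal ((new s)^2))
          < ∫⁻ s in Ioo 0 Tl, ENNReal.ofReal ((old s)^2)) := by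
  have hε2 : ε * ε = 1 := by rcases hε with h | h <;> subst h <;> norm_num
  set gg : ℝ → ℝ := (Icc 0 Tl).indicator (fun s => ε * old s - c) with hgg
  have hggm : Measurable gg := ((hom.const_mul ε).sub measurable_const).indicator measurableSet_Icc
  have hggi : Integrable gg := by
    rw [hgg, integrable_indicator_iff measurableSet_Icc]
    exact (hoi.const_mul ε).sub ((integrableOn_const_iff).mpr (Or.inr (by simp [hTl])))
  set h : ℝ → ℝ := fun u => ∫ v in (0:ℝ)..u, gg v with hh
  have hhc : Continuous h := hggi.continuous_primitive 0
  set U : Set ℝ := {u | 0 < h u} with hU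
  have hUm : MeasurableSet U := (isOpen_lt continuous_const hhc).measurableSet
  have hUgi : Integrable (U.indicator gg) := hggi.indicator hUm
  set new : ℝ → ℝ := fun s => old s - ε * (U.indicator gg s) with hnew
  have hnewm : Measurable new := hom.sub ((hggm.indicator hUm).const_mul ε)
  -- old is interval integrable on [0,t] for t in [0,Tl]
  have holdII : ∀ t ∈ Icc (0:ℝ) Tl, IntervalIntegrable old volume 0 t := by
    intro t ht
    rw [intervalIntegrable_iff_integrableOn_Ioc_of_le ht.1]
    exact hoi.mono_set (Ioc_subset_Icc_self.trans (Icc_subset_Icc le_rfl ht.2))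
  -- primitive of gg on [0,Tl]
  have hC0 : ∀ t ∈ Icc (0:ℝ) Tl, h t = ε * (∫ s in (0:ℝ)..t, old s) - c * t := by
    intro t ht
    have h1 : h t = ∫ s in (0:ℝ)..t, (ε * old s - c) := by
      rw [hh]
      simp only
      rw [integral_of_le ht.1, integral_of_le ht.1]
      refine setIntegral_congr_fun measurableSet_Ioc fun s hs => ?_
      exact indicator_of_mem (Ioc_subset_Icc_self.trans (Icc_subset_Icc le_rfl ht.2) hs) _
    rw [h1, integral_sub (((holdII t ht).const_mul ε)) intervalIntegrable_const,
      intervalIntegral.integral_const_mul, intervalIntegral.integral_const]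
    simp [mul_comm]
  -- KEY applied to gg
  have hKEY : ∀ t : ℝ, 0 ≤ t → (∫ s in (0:ℝ)..t, U.indicator gg s) = max (h t) 0 :=
    fun t ht => key_identity gg hggi t ht
  have hendh : h Tl ≤ 0 := by
    rw [hC0 Tl ⟨hTl.le, le_rfl⟩]; linarith
  have hom2 : Measurable (fun s => (old s)^2) := hom.pow_const 2
  have main : (∫⁻ s in Ioo 0 Tl, ENNReal.ofReal ((old s)^2)) ≠ ⊤ →
      ∃ I : ℝ, 0 ≤ I ∧
        (∫ s in Ioo 0 Tl, (new s)^2) = (∫ s in Ioo 0 Tl, (old s)^2) - I ∧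
        (∫⁻ s in Ioo 0 Tl, ENNReal.ofReal ((new s)^2))
          = ENNReal.ofReal (∫ s in Ioo 0 Tl, (new s)^2) ∧
        (∫⁻ s in Ioo 0 Tl, ENNReal.ofReal ((old s)^2))
          = ENNReal.ofReal (∫ s in Ioo 0 Tl, (old s)^2) ∧
        (I = 0 → ∀ t ∈ Icc 0 Tl, h t ≤ 0) ∧
        0 ≤ ∫ s in Ioo 0 Tl, (new s)^2 := by
    intro hfin
    have hIccIoo : Ioo (0:ℝ) Tl ⊆ Icc 0 Tl := Ioo_subset_Icc_self
    have hold2i : IntegrableOn (fun s => (old s)^2) (Ioo 0 Tl) :=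
      integrableOn_of_lintegral_ne_top hom2 (fun x => sq_nonneg _) hfin
    have hbndi : IntegrableOn (fun s => 2*(old s)^2 + 2*c^2) (Ioo 0 Tl) :=
      (hold2i.const_mul 2).add ((integrableOn_const_iff).mpr (Or.inr (by simp [hTl])))
    have hgg2i : IntegrableOn (fun s => (gg s)^2) (Ioo 0 Tl) := by
      refine Integrable.mono hbndi ((hggm.pow_const 2).aestronglyMeasurable.restrict) ?_
      filter_upwards with s
      rw [Real.norm_eq_abs, Real.norm_eq_abs, abs_of_nonneg (sq_nonneg _),
        abs_of_nonneg (by positivity)]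
      by_cases hs : s ∈ Icc (0:ℝ) Tl
      · rw [hgg]
        simp only [indicator_of_mem hs]
        nlinarith [sq_nonneg (ε*old s + c), sq_nonneg (old s), hε2, sq_nonneg (ε*old s - c)]
      · rw [hgg]
        simp only [indicator_of_notMem hs]
        nlinarith [sq_nonneg (old s), sq_nonneg c]
    have hUgg2i : IntegrableOn (fun s => U.indicator (fun u => (gg u)^2) s) (Ioo 0 Tl) :=
      hgg2i.indicator hUm
    have hUggi' : IntegrableOn (fun s => U.indicator gg s) (Ioo 0 Tl) := hUgi.integrableOn
    have hpt : ∀ s ∈ Ioo (0:ℝ) Tl, (new s)^2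
        = (old s)^2 - (U.indicator (fun u => (gg u)^2) s + 2*c*(U.indicator gg s)) := by
      intro s hs
      by_cases hsU : s ∈ U
      · have h1 : gg s = ε * old s - c := by rw [hgg, indicator_of_mem (hIccIoo hs)]
        rw [hnew]
        simp only [indicator_of_mem hsU, h1]
        rcases hε with h | h <;> rw [h] <;> ring
      · rw [hnew]
        simp only [indicator_of_notMem hsU]
        ring
    have hsumi : IntegrableOn
        (fun s => U.indicator (fun u => (gg u)^2) s + 2*c*(U.indicator gg s)) (Ioo 0 Tl) :=
      hUgg2i.add (hUggi'.const_mul _)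
    have hnew2i : IntegrableOn (fun s => (new s)^2) (Ioo 0 Tl) := by
      refine IntegrableOn.congr_fun (f := fun s => (old s)^2
        - (U.indicator (fun u => (gg u)^2) s + 2*c*(U.indicator gg s))) ?_ ?_ measurableSet_Ioo
      · exact hold2i.sub hsumi
      · intro s hs
        exact (hpt s hs).symm
    have hUggzero : (∫ s in Ioo 0 Tl, U.indicator gg s) = 0 := by
      have h1 : (∫ s in Ioo 0 Tl, U.indicator gg s) = ∫ s in Ioc 0 Tl, U.indicator gg s :=
        setIntegral_congr_set Ioo_ae_eq_Ioc
      have h2 : (∫ s in Ioc 0 Tl, U.indicator gg s) = ∫ s in (0:ℝ)..Tl, U.indicator gg s :=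
        (integral_of_le hTl.le).symm
      rw [h1, h2, hKEY Tl hTl.le, max_eq_right hendh]
    refine ⟨∫ s in Ioo 0 Tl, U.indicator (fun u => (gg u)^2) s,
      setIntegral_nonneg measurableSet_Ioo
        (fun s _ => indicator_nonneg (fun u _ => sq_nonneg _) s), ?_, ?_, ?_, ?_, ?_⟩
    · rw [setIntegral_congr_fun measurableSet_Ioo hpt, integral_sub hold2i hsumi,
        integral_add hUgg2i (hUggi'.const_mul _), MeasureTheory.integral_const_mul, hUggzero]
      ring
    · exact (ofReal_integral_eq_lintegral_ofReal hnew2i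
        (Eventually.of_forall fun s => sq_nonneg _)).symm
    · exact (ofReal_integral_eq_lintegral_ofReal hold2i
        (Eventually.of_forall fun s => sq_nonneg _)).symm
    · intro hI0 t ht
      have hz1 : (fun s => U.indicator (fun u => (gg u)^2) s) =ᵐ[volume.restrict (Ioo 0 Tl)] 0 :=
        (integral_eq_zero_iff_of_nonneg_ae
          (Eventually.of_forall fun s => indicator_nonneg (fun u _ => sq_nonneg _) s)
          hUgg2i).mp hI0
      have hz2 : ∀ᵐ s ∂(volume.restrict (Ioo 0 Tl)), U.indicator gg s = 0 := by
        filter_upwards [hz1] with s hs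
        by_cases hsU : s ∈ U
        · rw [indicator_of_mem hsU]
          rw [indicator_of_mem hsU] at hs
          exact pow_eq_zero_iff (n := 2) (by norm_num) |>.mp hs
        · rw [indicator_of_notMem hsU]
      have hz3 : ∀ᵐ s : ℝ ∂volume, U.indicator gg s = 0 := by
        have h3 := (ae_restrict_iff' measurableSet_Ioo).mp hz2
        have h4 : ∀ᵐ s : ℝ ∂volume, s ∉ ({0, Tl} : Set ℝ) :=
          measure_eq_zero_iff_ae_notMem.mp ((Set.to_countable _).measure_zero volume)
        filter_upwards [h3, h4] with s hs1 hs2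
        by_cases hsI : s ∈ Ioo (0:ℝ) Tl
        · exact hs1 hsI
        · have hsIcc : s ∉ Icc (0:ℝ) Tl := by
            intro hmem
            rcases eq_or_lt_of_le hmem.1 with h | h
            · exact hs2 (by simp [← h])
            rcases eq_or_lt_of_le hmem.2 with h' | h'
            · exact hs2 (by simp [h'])
            · exact hsI ⟨h, h'⟩
          have : gg s = 0 := by rw [hgg, indicator_of_notMem hsIcc]
          by_cases hsU : s ∈ U
          · rw [indicator_of_mem hsU, this]
          · rw [indicator_of_notMem hsU]
      have h5 : (∫ s in (0:ℝ)..t, U.indicator gg s) = 0 := by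
        rw [integral_of_le ht.1]
        exact integral_eq_zero_of_ae (ae_restrict_of_ae hz3)
      have h6 := hKEY t ht.1
      rw [h5] at h6
      calc h t ≤ max (h t) 0 := le_max_left _ _
        _ = 0 := h6.symm
    · exact setIntegral_nonneg measurableSet_Ioo (fun s _ => sq_nonneg _)
  refine ⟨new, hnewm, ?_, ?_, ?_, ?_, ?_⟩
  · -- integrable on Icc
    exact hoi.sub ((hUgi.const_mul ε).integrableOn)
  · -- pointwise formula
    intro s hs
    rw [← hC0 s hs]
    by_cases hsU : s ∈ U
    · have hsU' : 0 < h s := hsU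
      rw [if_pos hsU']
      have : U.indicator gg s = ε * old s - c := by
        rw [indicator_of_mem hsU, hgg, indicator_of_mem hs]
      rw [hnew]
      simp only [this]
      have : old s - ε * (ε * old s - c) = old s * (1 - ε * ε) + ε * c := by ring
      rw [this, hε2]; ring
    · have hsU' : ¬ 0 < h s := hsU
      rw [if_neg hsU']
      rw [hnew]
      simp only [indicator_of_notMem hsU]
      ring
  · -- primitive formula
    intro t ht
    rw [← hC0 t ht]
    have : (∫ s in (0:ℝ)..t, new s)
        = (∫ s in (0:ℝ)..t, old s) - ε * ∫ s in (0:ℝ)..t, U.indicator gg s := by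
      rw [hnew]
      simp only
      rw [integral_sub (holdII t ht) ((hUgi.intervalIntegrable).const_mul ε),
        intervalIntegral.integral_const_mul]
    rw [this, hKEY t ht.1]
  · -- energy inequality
    by_cases hfin : (∫⁻ s in Ioo 0 Tl, ENNReal.ofReal ((old s)^2)) = ⊤
    · rw [hfin]; exact le_top
    · obtain ⟨I, hI0, hIeq, hln, hlo, _, hn0⟩ := main hfin
      rw [hln, hlo, hIeq]
      exact ENNReal.ofReal_le_ofReal (by linarith)
  · -- strict energy inequality
    intro hbad hfin
    obtain ⟨I, hI0, hIeq, hln, hlo, hzero, hn0⟩ := main hfin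
    have hIpos : 0 < I := by
      rcases lt_or_eq_of_le hI0 with h | h
      · exact h
      · exfalso
        obtain ⟨t₀, ht₀, hbad'⟩ := hbad
        have := hzero h.symm t₀ ht₀
        rw [hC0 t₀ ht₀] at this
        linarith
    rw [hln, hlo, hIeq]
    exact (ENNReal.ofReal_lt_ofReal_iff_of_nonneg (by rw [← hIeq] at *; exact hn0)).mpr
      (by linarith)

lemma min_eq_sub_max (a b : ℝ) : min a b = a - max (a - b) 0 := by
  rcases le_total a b with h | h
  · rw [min_eq_left h, max_eq_right (by linarith)]; ring
  · rw [min_eq_right h, max_eq_left (by linarith)]; ring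

lemma max_eq_add_max (a b : ℝ) : max a b = a + max (b - a) 0 := by
  rcases le_total a b with h | h
  · rw [max_eq_right h, max_eq_left (by linarith)]; ring
  · rw [max_eq_left h, max_eq_right (by linarith)]; ring

/-- The full (two-sided) clamping of a single curve. -/
lemma curve_clamp (Tl c : ℝ) (hTl : 0 < Tl) (hc : 0 < c)
    (d f : ℝ → ℝ) (hdm : Measurable d) (hdi : IntegrableOn d (Icc 0 Tl))
    (hf : ∀ t ∈ Icc 0 Tl, f t = ∫ s in (0:ℝ)..t, d s)
    (hfT : |f Tl| ≤ c * Tl)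
    (e : ℝ → ℝ)
    (he : ∀ s ∈ Icc 0 Tl,
      e s = if -(min (f s) (c*s)) ≤ c*s then (if f s ≤ c*s then d s else c) else -c) :
    IntegrableOn e (Icc 0 Tl) ∧
    (∀ t ∈ Icc 0 Tl, (∫ s in (0:ℝ)..t, e s) = max (min (f t) (c*t)) (-(c*t))) ∧
    ((∫⁻ s in Ioo 0 Tl, ENNReal.ofReal ((e s)^2))
        ≤ ∫⁻ s in Ioo 0 Tl, ENNReal.ofReal ((d s)^2)) ∧
    ((∃ t ∈ Icc 0 Tl, c*t < |f t|) →
      (∫⁻ s in Ioo 0 Tl, ENNReal.ofReal ((d s)^2)) ≠ ⊤ →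
      (∫⁻ s in Ioo 0 Tl, ENNReal.ofReal ((e s)^2))
        < ∫⁻ s in Ioo 0 Tl, ENNReal.ofReal ((d s)^2)) := by
  have habs := abs_le.mp hfT
  set d' : ℝ → ℝ := (Icc 0 Tl).indicator d with hd'
  have hd'm : Measurable d' := hdm.indicator measurableSet_Icc
  have hd'i : Integrable d' := (integrable_indicator_iff measurableSet_Icc).mpr hdi
  have hInt1 : ∀ t ∈ Icc (0:ℝ) Tl, (∫ s in (0:ℝ)..t, d' s) = f t := by
    intro t ht
    rw [hf t ht, integral_of_le ht.1, integral_of_le ht.1]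
    refine setIntegral_congr_fun measurableSet_Ioc fun s hs => ?_
    exact indicator_of_mem (Ioc_subset_Icc_self.trans (Icc_subset_Icc le_rfl ht.2) hs) _
  have hIccTl : Tl ∈ Icc (0:ℝ) Tl := ⟨hTl.le, le_rfl⟩
  obtain ⟨e₁, he₁m, he₁i, he₁pt, he₁int, he₁en, he₁strict⟩ :=
    clamp_step Tl c hTl hc 1 (Or.inl rfl) d' hd'm hd'i.integrableOn
      (by rw [hInt1 Tl hIccTl]; linarith)
  -- translate step-1 conclusions
  have he₁pt' : ∀ s ∈ Icc (0:ℝ) Tl, e₁ s = if 0 < f s - c*s then c else d s := by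
    intro s hs
    rw [he₁pt s hs, hInt1 s hs]
    by_cases h : 0 < f s - c * s
    · rw [if_pos (by linarith), if_pos h, one_mul]
    · rw [if_neg (by intro hcon; exact h (by linarith)), if_neg h, hd',
        indicator_of_mem hs]
  have he₁int' : ∀ t ∈ Icc (0:ℝ) Tl, (∫ s in (0:ℝ)..t, e₁ s) = min (f t) (c*t) := by
    intro t ht
    rw [he₁int t ht, hInt1 t ht, min_eq_sub_max]
    ring_nf
  obtain ⟨e₂, he₂m, he₂i, he₂pt, he₂int, he₂en, he₂strict⟩ :=
    clamp_step Tl c hTl hc (-1) (Or.inr rfl) e₁ he₁m he₁i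
      (by rw [he₁int' Tl hIccTl, min_eq_left (by linarith)]; linarith)
  have he₂pt' : ∀ s ∈ Icc (0:ℝ) Tl,
      e₂ s = if 0 < -(min (f s) (c*s)) - c*s then -c else e₁ s := by
    intro s hs
    rw [he₂pt s hs, he₁int' s hs]
    by_cases h : 0 < -(min (f s) (c*s)) - c*s
    · rw [if_pos (by linarith), if_pos h]; ring
    · rw [if_neg (by intro hcon; exact h (by linarith)), if_neg h]
  have he₂int' : ∀ t ∈ Icc (0:ℝ) Tl,
      (∫ s in (0:ℝ)..t, e₂ s) = max (min (f t) (c*t)) (-(c*t)) := by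
    intro t ht
    rw [he₂int t ht, he₁int' t ht, max_eq_add_max (min (f t) (c*t)) (-(c*t))]
    have h1 : max (-1 * (min (f t) (c*t)) - c*t) 0 = max (-(c*t) - min (f t) (c*t)) 0 := by
      ring_nf
    rw [h1]; ring
  -- e agrees with e₂ on [0,Tl]
  have hee₂ : ∀ s ∈ Icc (0:ℝ) Tl, e s = e₂ s := by
    intro s hs
    rw [he s hs, he₂pt' s hs, he₁pt' s hs]
    by_cases h1 : -(min (f s) (c*s)) ≤ c*s
    · have hneg2 : ¬ (0 < -(min (f s) (c*s)) - c*s) := by push_neg; linarith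
      rw [if_pos h1, if_neg hneg2]
      by_cases h2 : f s ≤ c*s
      · rw [if_pos h2, if_neg (show ¬ (0 < f s - c*s) by push_neg; linarith)]
      · rw [if_neg h2, if_pos (show 0 < f s - c*s by push_neg at h2; linarith)]
    · have hpos2 : 0 < -(min (f s) (c*s)) - c*s := by push_neg at h1; linarith
      rw [if_neg h1, if_pos hpos2]
  -- lintegral translations
  have hIoosub : Ioo (0:ℝ) Tl ⊆ Icc 0 Tl := Ioo_subset_Icc_self
  have hLe : (∫⁻ s in Ioo 0 Tl, ENNReal.ofReal ((e s)^2))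
      = ∫⁻ s in Ioo 0 Tl, ENNReal.ofReal ((e₂ s)^2) := by
    refine setLIntegral_congr_fun_ae measurableSet_Ioo ?_
    filter_upwards with s hs
    rw [hee₂ s (hIoosub hs)]
  have hLd : (∫⁻ s in Ioo 0 Tl, ENNReal.ofReal ((d' s)^2))
      = ∫⁻ s in Ioo 0 Tl, ENNReal.ofReal ((d s)^2) := by
    refine setLIntegral_congr_fun_ae measurableSet_Ioo ?_
    filter_upwards with s hs
    rw [hd', indicator_of_mem (hIoosub hs)]
  refine ⟨?_, ?_, ?_, ?_⟩
  · exact IntegrableOn.congr_fun he₂i (fun s hs => (hee₂ s hs).symm) measurableSet_Icc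
  · intro t ht
    have : (∫ s in (0:ℝ)..t, e s) = ∫ s in (0:ℝ)..t, e₂ s := by
      refine integral_congr fun s hs => ?_
      rw [uIcc_of_le ht.1] at hs
      exact hee₂ s (Icc_subset_Icc le_rfl ht.2 hs)
    rw [this, he₂int' t ht]
  · rw [hLe, ← hLd]
    exact le_trans he₂en he₁en
  · rintro ⟨t₀, ht₀, hbad⟩ hfin
    rw [hLe, ← hLd]
    rw [← hLd] at hfin
    rcases lt_or_ge (c*t₀) (f t₀) with hcase | hcase
    · -- strict in step 1
      have hstrict1 := he₁strict ⟨t₀, ht₀, by rw [hInt1 t₀ ht₀]; linarith⟩ hfin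
      exact lt_of_le_of_lt he₂en hstrict1
    · -- strict in step 2
      have hct₀ : 0 ≤ c * t₀ := mul_nonneg hc.le ht₀.1
      have hfneg : f t₀ < -(c*t₀) := by
        rcases abs_cases (f t₀) with ⟨habs', _⟩ | ⟨habs', _⟩ <;> [linarith; linarith]
      have hmin : min (f t₀) (c*t₀) = f t₀ := min_eq_left (by linarith)
      have hbad2 : 0 < -1 * (∫ u in (0:ℝ)..t₀, e₁ u) - c * t₀ := by
        rw [he₁int' t₀ ht₀, hmin]; linarith
      have hfin1 : (∫⁻ s in Ioo 0 Tl, ENNReal.ofReal ((e₁ s)^2)) ≠ ⊤ :=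
        fun h => hfin (le_antisymm le_top (h ▸ he₁en))
      have hstrict2 := he₂strict ⟨t₀, ht₀, hbad2⟩ hfin1
      exact lt_of_lt_of_le hstrict2 he₁en

lemma Tlam_pos {T lam : ℝ} (hT : 0 < T) (hlam : 0 < lam) : 0 < Tlam T lam := by
  have : 0 < 1/lam := by positivity
  simp only [Tlam]; linarith

lemma Tlam_gt {T lam : ℝ} (hlam : 0 < lam) : T < Tlam T lam := by
  have : 0 < 1/lam := by positivity
  simp only [Tlam]; linarith

lemma lagE_ne_top (Φ T lam : ℝ) (hΦ : 0 < Φ) (hT : 0 < T) (hlam : 0 < lam) :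
    lagE Φ T lam 0 ≠ ⊤ := by
  set Tl := Tlam T lam with hTldef
  have hTl : 0 < Tl := Tlam_pos hT hlam
  have hTlt : T < Tl := Tlam_gt hlam
  set X₀ : ℝ → ℝ → ℝ := fun t x => if t ≤ T then 0 else lam*(t-T)*x with hX₀
  set D₀ : ℝ → ℝ → ℝ := fun t x => if t ≤ T then 0 else lam*x with hD₀
  have hadm : LagAdm Φ Tl 0 X₀ D₀ := by
    constructor
    · show Measurable fun p : ℝ × ℝ => if p.1 ≤ T then (0:ℝ) else lam*(p.1-T)*p.2
      exact Measurable.ite (measurableSet_le measurable_fst measurable_const)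
        measurable_const (((measurable_fst.sub measurable_const).const_mul lam).mul
          measurable_snd)
    · show Measurable fun p : ℝ × ℝ => if p.1 ≤ T then (0:ℝ) else lam*p.2
      exact Measurable.ite (measurableSet_le measurable_fst measurable_const)
        measurable_const (measurable_snd.const_mul lam)
    · refine ae_of_all _ fun x => ⟨?_, ?_, ?_, ?_⟩
      · show (if (0:ℝ) ≤ T then (0:ℝ) else _) = 0
        rw [if_pos hT.le]
      · show (if Tl ≤ T then (0:ℝ) else lam*(Tl-T)*x) = x
        rw [if_neg (not_le.mpr hTlt)]
        have : Tl - T = 1/lam := by rw [hTldef]; simp [Tlam]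
        rw [this]; field_simp
      · have hm : Measurable fun t : ℝ => if t ≤ T then (0:ℝ) else lam*x :=
          Measurable.ite measurableSet_Iic measurable_const measurable_const
        refine Integrable.mono' (g := fun _ => |lam*x|)
          ((integrableOn_const_iff).mpr (Or.inr measure_Icc_lt_top))
          hm.aestronglyMeasurable.restrict (Eventually.of_forall fun t => ?_)
        show ‖if t ≤ T then (0:ℝ) else lam*x‖ ≤ |lam*x|
        split_ifs <;> simp [Real.norm_eq_abs, abs_mul, le_refl] <;> positivity
      · intro t ht
        have hII : ∀ a b : ℝ, IntervalIntegrable (fun s => if s ≤ T then (0:ℝ) else lam*x)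
            volume a b := by
          intro a b
          rw [intervalIntegrable_iff]
          refine Integrable.mono' (g := fun _ => |lam*x|)
            ((integrableOn_const_iff).mpr (Or.inr measure_Ioc_lt_top))
            ((Measurable.ite measurableSet_Iic measurable_const
              measurable_const).aestronglyMeasurable.restrict)
            (Eventually.of_forall fun s => ?_)
          show ‖if s ≤ T then (0:ℝ) else lam*x‖ ≤ |lam*x|
          split_ifs <;> simp [Real.norm_eq_abs, abs_mul, le_refl] <;> positivity
        rcases le_or_gt t T with hcase | hcase
        · show (if t ≤ T then (0:ℝ) else _) = 0 + ∫ s in (0:ℝ)..t, D₀ s x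
          rw [if_pos hcase, zero_add]
          have : (∫ s in (0:ℝ)..t, D₀ s x) = ∫ s in (0:ℝ)..t, (0:ℝ) := by
            refine intervalIntegral.integral_congr fun s hs => ?_
            rw [uIcc_of_le ht.1] at hs
            show (if s ≤ T then (0:ℝ) else lam*x) = 0
            rw [if_pos (le_trans hs.2 hcase)]
          rw [this]; simp
        · show (if t ≤ T then (0:ℝ) else lam*(t-T)*x) = 0 + ∫ s in (0:ℝ)..t, D₀ s x
          rw [if_neg (not_le.mpr hcase), zero_add]
          have hsplit : (∫ s in (0:ℝ)..T, D₀ s x) + (∫ s in T..t, D₀ s x)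
              = ∫ s in (0:ℝ)..t, D₀ s x :=
            intervalIntegral.integral_add_adjacent_intervals (hII 0 T) (hII T t)
          have h1 : (∫ s in (0:ℝ)..T, D₀ s x) = 0 := by
            have : (∫ s in (0:ℝ)..T, D₀ s x) = ∫ s in (0:ℝ)..T, (0:ℝ) := by
              refine intervalIntegral.integral_congr fun s hs => ?_
              rw [uIcc_of_le hT.le] at hs
              show (if s ≤ T then (0:ℝ) else lam*x) = 0
              rw [if_pos hs.2]
            rw [this]; simp
          have h2 : (∫ s in T..t, D₀ s x) = (t - T) * (lam * x) := by
            rw [intervalIntegral.integral_of_le hcase.le]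
            have : (∫ s in Ioc T t, D₀ s x) = ∫ s in Ioc T t, (lam*x) := by
              refine setIntegral_congr_fun measurableSet_Ioc fun s hs => ?_
              show (if s ≤ T then (0:ℝ) else lam*x) = lam*x
              rw [if_neg (not_le.mpr hs.1)]
            rw [this, setIntegral_const, Real.volume_real_Ioc_of_le hcase.le,
              smul_eq_mul]
          rw [← hsplit, h1, h2]; ring
  have henergy : lagEnergy Φ T lam X₀ D₀ ≠ ⊤ := by
    rw [lagEnergy]
    refine ENNReal.add_ne_top.mpr ⟨?_, ?_⟩
    · -- multiplicity term
      have hbound : ∀ t ∈ Ioo (0:ℝ) T,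
          (∫⁻ x in Icc (-(Φ/2)) (Φ/2), (mult Φ X₀ (X₀ t x) t)⁻¹) ≤ 1 := by
        intro t ht
        have hX0 : ∀ x : ℝ, X₀ t x = 0 := fun x => by
          show (if t ≤ T then (0:ℝ) else _) = 0
          rw [if_pos ht.2.le]
        have hmult : ∀ x : ℝ, mult Φ X₀ (X₀ t x) t = ENNReal.ofReal Φ := by
          intro x
          have hset : {x' | x' ∈ Icc (-(Φ/2)) (Φ/2) ∧ X₀ t x' = X₀ t x}
              = Icc (-(Φ/2)) (Φ/2) := by
            ext x'
            simp [hX0 x', hX0 x]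
          rw [mult, hset, Real.volume_Icc]
          norm_num
        refine le_of_eq ?_
        calc (∫⁻ x in Icc (-(Φ/2)) (Φ/2), (mult Φ X₀ (X₀ t x) t)⁻¹)
            = ∫⁻ _x in Icc (-(Φ/2)) (Φ/2), (ENNReal.ofReal Φ)⁻¹ := by
              refine setLIntegral_congr_fun_ae measurableSet_Icc ?_
              filter_upwards with x _
              rw [hmult x]
          _ = (ENNReal.ofReal Φ)⁻¹ * volume (Icc (-(Φ/2)) (Φ/2)) := setLIntegral_const _ _
          _ = (ENNReal.ofReal Φ)⁻¹ * ENNReal.ofReal Φ := by rw [Real.volume_Icc]; norm_num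
          _ = 1 := by
              rw [ENNReal.inv_mul_cancel (by simp [hΦ]) ENNReal.ofReal_ne_top]
      refine ne_top_of_le_ne_top (b := volume (Ioo (0:ℝ) T)) ?_ ?_
      · rw [Real.volume_Ioo]; exact ENNReal.ofReal_ne_top
      · calc (∫⁻ t in Ioo (0:ℝ) T, ∫⁻ x in Icc (-(Φ/2)) (Φ/2), (mult Φ X₀ (X₀ t x) t)⁻¹)
            ≤ ∫⁻ _t in Ioo (0:ℝ) T, 1 := setLIntegral_mono' measurableSet_Ioo hbound
          _ = volume (Ioo (0:ℝ) T) := setLIntegral_one _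
    · -- kinetic term
      set C2 : ℝ := (lam*(Φ/2))^2 with hC2
      have hbound : ∀ t ∈ Ioo (0:ℝ) Tl,
          (∫⁻ x in Icc (-(Φ/2)) (Φ/2), ENNReal.ofReal ((D₀ t x)^2))
            ≤ ENNReal.ofReal C2 * ENNReal.ofReal Φ := by
        intro t _
        have hptw : ∀ x ∈ Icc (-(Φ/2)) (Φ/2),
            ENNReal.ofReal ((D₀ t x)^2) ≤ ENNReal.ofReal C2 := by
          intro x hx
          refine ENNReal.ofReal_le_ofReal ?_
          have hxa : |x| ≤ Φ/2 := abs_le.mpr ⟨by linarith [hx.1], hx.2⟩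
          show (if t ≤ T then (0:ℝ) else lam*x)^2 ≤ C2
          split_ifs
          · rw [hC2]; nlinarith [sq_nonneg (lam*(Φ/2))]
          · rw [hC2]
            have h1 : |lam*x| ≤ |lam*(Φ/2)| := by
              rw [abs_mul, abs_mul]
              refine mul_le_mul_of_nonneg_left ?_ (abs_nonneg lam)
              rw [abs_of_nonneg (by linarith : (0:ℝ) ≤ Φ/2)]
              exact hxa
            calc (lam*x)^2 = |lam*x|^2 := (sq_abs _).symm
              _ ≤ |lam*(Φ/2)|^2 := by gcongr
              _ = (lam*(Φ/2))^2 := sq_abs _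
        calc (∫⁻ x in Icc (-(Φ/2)) (Φ/2), ENNReal.ofReal ((D₀ t x)^2))
            ≤ ∫⁻ _x in Icc (-(Φ/2)) (Φ/2), ENNReal.ofReal C2 :=
              setLIntegral_mono' measurableSet_Icc hptw
          _ = ENNReal.ofReal C2 * volume (Icc (-(Φ/2)) (Φ/2)) := setLIntegral_const _ _
          _ = ENNReal.ofReal C2 * ENNReal.ofReal Φ := by rw [Real.volume_Icc]; norm_num
      refine ne_top_of_le_ne_top
        (b := (ENNReal.ofReal C2 * ENNReal.ofReal Φ) * volume (Ioo (0:ℝ) Tl)) ?_ ?_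
      · rw [Real.volume_Ioo]
        exact ENNReal.mul_ne_top (ENNReal.mul_ne_top ENNReal.ofReal_ne_top
          ENNReal.ofReal_ne_top) ENNReal.ofReal_ne_top
      · calc (∫⁻ t in Ioo (0:ℝ) Tl, ∫⁻ x in Icc (-(Φ/2)) (Φ/2), ENNReal.ofReal ((D₀ t x)^2))
            ≤ ∫⁻ _t in Ioo (0:ℝ) Tl, (ENNReal.ofReal C2 * ENNReal.ofReal Φ) :=
              setLIntegral_mono' measurableSet_Ioo hbound
          _ = (ENNReal.ofReal C2 * ENNReal.ofReal Φ) * volume (Ioo (0:ℝ) Tl) :=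
              setLIntegral_const _ _
  refine ne_top_of_le_ne_top henergy ?_
  rw [lagE]
  exact iInf_le_of_le X₀ (iInf_le_of_le D₀ (iInf_le _ hadm))

end AuxClamp

/-- cone property. If `X` is a minimizer of `E(Φ,T,λ)`, then for every
`s ∈ [0,T_λ]` and a.e. `x ∈ [-Φ/2,Φ/2]` one has `|X(s,x)| ≤ (s/T_λ)(Φ/2)`; in particular
a.e. `|X(T,x)| ≤ (λT/(1+λT))·(Φ/2)`. -/
theorem statement19 (Φ T lam : ℝ) (hΦ : 0 < Φ) (hT : 0 < T) (hlam : 0 < lam)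
    (X D : ℝ → ℝ → ℝ) (hadm : LagAdm Φ (Tlam T lam) 0 X D)
    (hmin : lagEnergy Φ T lam X D = lagE Φ T lam 0) :
    (∀ s ∈ Icc (0:ℝ) (Tlam T lam),
      ∀ᵐ x ∂(volume.restrict (Icc (-(Φ/2)) (Φ/2))),
        |X s x| ≤ (s / Tlam T lam) * (Φ/2)) ∧
    (∀ᵐ x ∂(volume.restrict (Icc (-(Φ/2)) (Φ/2))),
      |X T x| ≤ (lam * T / (1 + lam * T)) * (Φ/2)) := by
  have hTl : 0 < Tlam T lam := Tlam_pos hT hlam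
  have hTlt : T < Tlam T lam := Tlam_gt hlam
  set Tl : ℝ := Tlam T lam with hTldef
  set c : ℝ := (Φ/2)/Tl with hcdef
  have hc : 0 < c := div_pos (by linarith) hTl
  have hcTl : c * Tl = Φ/2 := div_mul_cancel₀ _ hTl.ne'
  set I : Set ℝ := Icc (-(Φ/2)) (Φ/2) with hIdef
  set μ : Measure ℝ := volume.restrict I with hμdef
  -- finiteness of the two parts of the energy of X
  have hfin : (∫⁻ t in Ioo (0:ℝ) T, ∫⁻ x in I, (mult Φ X (X t x) t)⁻¹)
      + (∫⁻ t in Ioo (0:ℝ) Tl, ∫⁻ x in I, ENNReal.ofReal ((D t x)^2)) ≠ ⊤ := by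
    have : lagEnergy Φ T lam X D ≠ ⊤ := by rw [hmin]; exact lagE_ne_top Φ T lam hΦ hT hlam
    exact this
  obtain ⟨hMXfin, hKXfin⟩ := ENNReal.add_ne_top.mp hfin
  -- the competitor
  set Y : ℝ → ℝ → ℝ := fun t x => max (min (X t x) (c*t)) (-(c*t)) with hYdef
  set Ed : ℝ → ℝ → ℝ := fun t x =>
    if -(min (X t x) (c*t)) ≤ c*t then (if X t x ≤ c*t then D t x else c) else -c with hEddef
  -- measurability
  have hXm : Measurable fun p : ℝ × ℝ => X p.1 p.2 := hadm.measX
  have hDm : Measurable fun p : ℝ × ℝ => D p.1 p.2 := hadm.measD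
  have hct : Measurable fun p : ℝ × ℝ => c * p.1 := measurable_fst.const_mul c
  have hYm : Measurable (Function.uncurry Y) := (hXm.min hct).max hct.neg
  have hEdm : Measurable (Function.uncurry Ed) := by
    show Measurable fun p : ℝ × ℝ =>
      if -(min (X p.1 p.2) (c*p.1)) ≤ c*p.1 then
        (if X p.1 p.2 ≤ c*p.1 then D p.1 p.2 else c) else -c
    exact Measurable.ite (measurableSet_le (hXm.min hct).neg hct)
      (Measurable.ite (measurableSet_le hXm hct) hDm measurable_const) measurable_const
  have hDsec : ∀ x, Measurable fun t => D t x := fun x => hadm.measD.of_uncurry_right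
  -- the x-sliced kinetic energies
  set A : ℝ → ℝ≥0∞ := fun x => ∫⁻ s in Ioo (0:ℝ) Tl, ENNReal.ofReal ((D s x)^2) with hAdef
  set B : ℝ → ℝ≥0∞ := fun x => ∫⁻ s in Ioo (0:ℝ) Tl, ENNReal.ofReal ((Ed s x)^2) with hBdef
  have hAm : Measurable A := by
    have hFm : Measurable fun p : ℝ × ℝ => ENNReal.ofReal ((D p.2 p.1)^2) :=
      (((hDm.comp measurable_swap).pow_const 2)).ennreal_ofReal
    exact Measurable.lintegral_prod_right' (f := fun p : ℝ × ℝ => ENNReal.ofReal ((D p.2 p.1)^2))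
      hFm
  have hBm : Measurable B := by
    have hEdm' : Measurable fun p : ℝ × ℝ => Ed p.1 p.2 := hEdm
    have hFm : Measurable fun p : ℝ × ℝ => ENNReal.ofReal ((Ed p.2 p.1)^2) :=
      (((hEdm'.comp measurable_swap).pow_const 2)).ennreal_ofReal
    exact Measurable.lintegral_prod_right' (f := fun p : ℝ × ℝ => ENNReal.ofReal ((Ed p.2 p.1)^2))
      hFm
  -- Tonelli swaps
  have hswapA : (∫⁻ x in I, A x)
      = ∫⁻ t in Ioo (0:ℝ) Tl, ∫⁻ x in I, ENNReal.ofReal ((D t x)^2) := by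
    exact (lintegral_lintegral_swap (((hDm.pow_const 2)).ennreal_ofReal.aemeasurable)).symm
  have hswapB : (∫⁻ x in I, B x)
      = ∫⁻ t in Ioo (0:ℝ) Tl, ∫⁻ x in I, ENNReal.ofReal ((Ed t x)^2) := by
    have hEdm' : Measurable fun p : ℝ × ℝ => Ed p.1 p.2 := hEdm
    exact (lintegral_lintegral_swap (((hEdm'.pow_const 2)).ennreal_ofReal.aemeasurable)).symm
  -- a.e. facts
  have hmemI : ∀ᵐ x ∂μ, x ∈ I := ae_restrict_mem measurableSet_Icc
  have hGood := hadm.curves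
  -- the per-slice consequences of clamping
  have hper : ∀ x, x ∈ I →
      (X 0 x = 0 ∧ X Tl x = x ∧ IntegrableOn (fun t => D t x) (Icc 0 Tl) ∧
        ∀ t ∈ Icc 0 Tl, X t x = 0 + ∫ s in (0:ℝ)..t, D s x) →
      (IntegrableOn (fun t => Ed t x) (Icc 0 Tl) ∧
        (∀ t ∈ Icc 0 Tl, (∫ s in (0:ℝ)..t, Ed s x)
            = max (min (X t x) (c*t)) (-(c*t))) ∧
        B x ≤ A x ∧
        ((∃ t ∈ Icc 0 Tl, c*t < |X t x|) → A x ≠ ⊤ → B x < A x)) := by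
    intro x hxI hcur
    obtain ⟨h0, hTlx, hDint, hprim⟩ := hcur
    have hf' : ∀ t ∈ Icc (0:ℝ) Tl, X t x = ∫ s in (0:ℝ)..t, D s x := fun t ht => by
      rw [hprim t ht, zero_add]
    have hfT : |X Tl x| ≤ c * Tl := by
      rw [hTlx, hcTl]
      exact abs_le.mpr ⟨by linarith [hxI.1], hxI.2⟩
    exact curve_clamp Tl c hTl hc (fun t => D t x) (fun t => X t x) (hDsec x) hDint hf' hfT
      (fun t => Ed t x) (fun s _ => rfl)
  -- main claim
  have claim : ∀ᵐ x ∂μ, ∀ t ∈ Icc (0:ℝ) Tl, |X t x| ≤ c*t := by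
    set S : Set ℝ := {x | B x < A x} with hSdef
    have hSm : MeasurableSet S := measurableSet_lt hBm hAm
    by_cases hSnull : μ S = 0
    · have hnS : ∀ᵐ x ∂μ, x ∉ S := measure_eq_zero_iff_ae_notMem.mp hSnull
      have hAfin : ∀ᵐ x ∂μ, A x < ⊤ := by
        refine ae_lt_top hAm ?_
        show (∫⁻ x in I, A x) ≠ ⊤
        rw [hswapA]; exact hKXfin
      filter_upwards [hGood, hmemI, hnS, hAfin] with x hcur hxI hxS hAx
      intro t ht
      by_contra hcontra
      push_neg at hcontra
      exact hxS ((hper x hxI hcur).2.2.2 ⟨t, ht, hcontra⟩ hAx.ne)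
    · exfalso
      have hSpos : 0 < μ S := pos_iff_ne_zero.mpr hSnull
      -- admissibility of the clamped competitor
      have hadmY : LagAdm Φ Tl 0 Y Ed := by
        refine ⟨hYm, hEdm, ?_⟩
        filter_upwards [hGood, hmemI] with x hcur hxI
        obtain ⟨hInt, hPrim, _, _⟩ := hper x hxI hcur
        obtain ⟨h0, hTlx, hDint, _⟩ := hcur
        refine ⟨?_, ?_, hInt, ?_⟩
        · show max (min (X 0 x) (c*0)) (-(c*0)) = 0
          rw [h0]; norm_num
        · show max (min (X Tl x) (c*Tl)) (-(c*Tl)) = x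
          rw [hTlx, hcTl, min_eq_left hxI.2, max_eq_left (by linarith [hxI.1])]
        · intro t ht
          rw [zero_add, hPrim t ht]
      -- multiplicity comparison
      have hMle : (∫⁻ t in Ioo (0:ℝ) T, ∫⁻ x in I, (mult Φ Y (Y t x) t)⁻¹)
          ≤ ∫⁻ t in Ioo (0:ℝ) T, ∫⁻ x in I, (mult Φ X (X t x) t)⁻¹ := by
        refine lintegral_mono fun t => lintegral_mono fun x' => ?_
        refine ENNReal.inv_le_inv' (measure_mono ?_)
        rintro x'' ⟨hx''I, hx''eq⟩
        refine ⟨hx''I, ?_⟩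
        show max (min (X t x'') (c*t)) (-(c*t)) = max (min (X t x') (c*t)) (-(c*t))
        rw [hx''eq]
      -- kinetic strict comparison
      have hBAae : ∀ᵐ x ∂μ, B x ≤ A x := by
        filter_upwards [hGood, hmemI] with x hcur hxI
        exact (hper x hxI hcur).2.2.1
      have hAint : (∫⁻ x in I, A x) ≠ ⊤ := by rw [hswapA]; exact hKXfin
      have hBlt : (∫⁻ x in I, B x) < ∫⁻ x in I, A x := by
        rcases (lintegral_mono_ae hBAae).lt_or_eq with hlt | heq
        · exact hlt
        · exfalso
          have hBfin : (∫⁻ x in I, B x) ≠ ⊤ := by rw [heq]; exact hAint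
          have hsub := lintegral_sub hBm hBfin hBAae
          rw [heq, tsub_self] at hsub
          have hz := (lintegral_eq_zero_iff (hAm.sub hBm)).mp hsub
          have : ∀ᵐ x ∂μ, x ∉ S := by
            filter_upwards [hz] with x hx
            show ¬ (B x < A x)
            exact not_lt.mpr (tsub_eq_zero_iff_le.mp hx)
          exact hSnull (measure_eq_zero_iff_ae_notMem.mpr this)
      -- total comparison
      have hlt : lagEnergy Φ T lam Y Ed < lagEnergy Φ T lam X D := by
        have h1 : (∫⁻ t in Ioo (0:ℝ) Tl, ∫⁻ x in I, ENNReal.ofReal ((Ed t x)^2))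
            < ∫⁻ t in Ioo (0:ℝ) Tl, ∫⁻ x in I, ENNReal.ofReal ((D t x)^2) := by
          rw [← hswapA, ← hswapB]; exact hBlt
        show (∫⁻ t in Ioo (0:ℝ) T, ∫⁻ x in I, (mult Φ Y (Y t x) t)⁻¹)
              + (∫⁻ t in Ioo (0:ℝ) Tl, ∫⁻ x in I, ENNReal.ofReal ((Ed t x)^2))
            < (∫⁻ t in Ioo (0:ℝ) T, ∫⁻ x in I, (mult Φ X (X t x) t)⁻¹)
              + (∫⁻ t in Ioo (0:ℝ) Tl, ∫⁻ x in I, ENNReal.ofReal ((D t x)^2))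
        calc _ ≤ (∫⁻ t in Ioo (0:ℝ) T, ∫⁻ x in I, (mult Φ X (X t x) t)⁻¹)
              + (∫⁻ t in Ioo (0:ℝ) Tl, ∫⁻ x in I, ENNReal.ofReal ((Ed t x)^2)) :=
              add_le_add hMle le_rfl
          _ < _ := ENNReal.add_lt_add_left hMXfin h1
      have hge : lagEnergy Φ T lam X D ≤ lagEnergy Φ T lam Y Ed := by
        rw [hmin, lagE]
        exact iInf_le_of_le Y (iInf_le_of_le Ed (iInf_le _ hadmY))
      exact absurd (lt_of_le_of_lt hge hlt) (lt_irrefl _)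
  constructor
  · intro s hs
    filter_upwards [claim] with x hx
    calc |X s x| ≤ c * s := hx s hs
      _ = s / Tl * (Φ/2) := by rw [hcdef]; ring
  · filter_upwards [claim] with x hx
    have h := hx T ⟨hT.le, hTlt.le⟩
    have hceq : c * T = (lam * T / (1 + lam * T)) * (Φ/2) := by
      rw [hcdef, hTldef]
      simp only [Tlam]
      have h1 : T + 1/lam ≠ 0 := by positivity
      have h2 : 1 + lam*T ≠ 0 := by positivity
      have h3 : lam ≠ 0 := hlam.ne'
      field_simp
      ring
    calc |X T x| ≤ c * T := h
      _ = (lam * T / (1 + lam * T)) * (Φ/2) := hceq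
end
end
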